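/- arXiv:2106.06128 — 2 statements merged into one kernel-verified Lean document; each statement's English description precedes it below -/
import Mathlib

section
/- (Greedy guarantee) Under the grounded Laplacian setup, let k be a positive integer with k ≤ |Q|. Define the greedy sequence T₀ = ∅ and, for 0 ≤ i < k, T_{i+1} = T_i ∪ {e_i} where e_i ∈ Q \ T_i is an element maximizing H(T_i ∪ {e}) − H(T_i) over e ∈ Q \ T_i. Then H(T_k) − H(∅) ≥ (1 − 1/e) · (H(T*) − H(∅)), where T* maximizes H over all subsets P ⊆ Q with |P| = k, and e is Euler's number. -/
open Matrix Finset

variable {n : Type*} [Fintype n] [DecidableEq n]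

lemma posdef_add_diag {M : Matrix n n ℝ} (hM : M.PosDef) {d : n → ℝ} (hd : ∀ i, 0 ≤ d i) :
    (M + Matrix.diagonal d).PosDef := by
  refine Matrix.PosDef.of_dotProduct_mulVec_pos ?_ ?_
  · exact hM.1.add (Matrix.isHermitian_diagonal_of_self_adjoint _
      (funext fun i => by simp [_root_.IsSelfAdjoint, star_trivial]))
  · intro x hx
    have h1 := hM.dotProduct_mulVec_pos hx
    have h2 : 0 ≤ x ⬝ᵥ (Matrix.diagonal d *ᵥ x) := by
      unfold dotProduct
      refine Finset.sum_nonneg fun i _ => ?_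
      rw [Matrix.mulVec_diagonal]
      have : x i * (d i * x i) = d i * (x i * x i) := by ring
      rw [this]
      exact mul_nonneg (hd i) (mul_self_nonneg _)
    rw [Matrix.add_mulVec, dotProduct_add]
    simp only [star_trivial] at h1 ⊢
    linarith

lemma inv_nonneg_of_posdef_Z {M : Matrix n n ℝ} (hM : M.PosDef)
    (hoff : ∀ i j, i ≠ j → M i j ≤ 0) : ∀ i j, 0 ≤ M⁻¹ i j := by
  intro i j
  set x : n → ℝ := M⁻¹ *ᵥ Pi.single j 1 with hxdef
  have hMx : M *ᵥ x = Pi.single j 1 := by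
    rw [hxdef, Matrix.mulVec_mulVec, Matrix.mul_nonsing_inv _ hM.det_pos.ne'.isUnit, Matrix.one_mulVec]
  -- negative part
  set xm : n → ℝ := fun l => max (-x l) 0 with hxmdef
  have hxm0 : ∀ l, 0 ≤ xm l := fun l => le_max_right _ _
  set xp : n → ℝ := fun l => max (x l) 0 with hxpdef
  have hxp0 : ∀ l, 0 ≤ xp l := fun l => le_max_right _ _
  have hsplit : ∀ l, x l = xp l - xm l := by
    intro l; simp only [hxpdef, hxmdef]
    rcases le_total (x l) 0 with h | h
    · rw [max_eq_right h, max_eq_left (by linarith)]; ring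
    · rw [max_eq_left h, max_eq_right (by linarith)]; ring
  have hprod : ∀ l, xm l * xp l = 0 := by
    intro l; simp only [hxpdef, hxmdef]
    rcases le_total (x l) 0 with h | h
    · rw [max_eq_right h]; ring
    · rw [max_eq_right (by linarith : -x l ≤ 0)]; ring
  -- key dot products
  have hkey : xm ⬝ᵥ (M *ᵥ x) = xm j := by
    rw [hMx]; simp [dotProduct_single]
  have hT1 : xm ⬝ᵥ (M *ᵥ xp) ≤ 0 := by
    have : xm ⬝ᵥ (M *ᵥ xp) = ∑ l, ∑ l', xm l * (M l l' * xp l') := by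
      simp only [dotProduct, Matrix.mulVec, dotProduct, Finset.mul_sum]
    rw [this]
    refine Finset.sum_nonpos fun l _ => ?_
    refine Finset.sum_nonpos fun l' _ => ?_
    by_cases h : l = l'
    · subst h
      rw [show xm l * (M l l * xp l) = M l l * (xm l * xp l) by ring, hprod, mul_zero]
    · have := hoff l l' h
      have : xm l * (M l l' * xp l') = (M l l') * (xm l * xp l') := by ring
      rw [this]
      exact mul_nonpos_of_nonpos_of_nonneg (hoff l l' h) (mul_nonneg (hxm0 l) (hxp0 l'))
  have hT2 : 0 ≤ xm ⬝ᵥ (M *ᵥ xm) := by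
    by_cases h : xm = 0
    · simp [h]
    · have := hM.dotProduct_mulVec_pos h
      simpa using this.le
  have hxeq : (x : n → ℝ) = fun l => xp l - xm l := funext hsplit
  have hdecomp : xm ⬝ᵥ (M *ᵥ x) = xm ⬝ᵥ (M *ᵥ xp) - xm ⬝ᵥ (M *ᵥ xm) := by
    rw [hxeq]
    rw [show (fun l => xp l - xm l) = xp - xm from rfl, Matrix.mulVec_sub, dotProduct_sub]
  have hxmj : 0 ≤ xm j := hxm0 j
  have hzero : xm ⬝ᵥ (M *ᵥ xm) = 0 := by
    rw [hkey] at hdecomp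
    nlinarith [hxm0 j]
  have hxmzero : xm = 0 := by
    by_contra h
    have := hM.dotProduct_mulVec_pos h
    simp only [star_trivial] at this
    rw [hzero] at this
    exact lt_irrefl 0 this
  have hxnn : 0 ≤ x i := by
    have : xm i = 0 := by rw [hxmzero]; rfl
    have h2 : -x i ≤ 0 := by
      by_contra h3
      push_neg at h3
      have : xm i = -x i := max_eq_left h3.le
      rw [hxmzero] at this
      simp at this
      linarith
    linarith
  have : M⁻¹ i j = x i := by
    rw [hxdef, Matrix.mulVec_single]
    simp
  rw [this]; exact hxnn

lemma SM {M : Matrix n n ℝ} (hdet : IsUnit M.det) (j : n) (lam : ℝ)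
    (hα : 1 + lam * M⁻¹ j j ≠ 0) :
    (M + lam • Matrix.single j j 1)⁻¹ =
      M⁻¹ - (lam / (1 + lam * M⁻¹ j j)) •
        Matrix.vecMulVec (fun i => M⁻¹ i j) (fun l => M⁻¹ j l) := by
  have hMB : M * M⁻¹ = 1 := Matrix.mul_nonsing_inv _ hdet
  apply Matrix.inv_eq_right_inv
  set B := M⁻¹ with hB
  set β := lam / (1 + lam * B j j) with hβ
  have hβeq : β * (1 + lam * B j j) = lam := div_mul_cancel₀ _ hα
  ext i l
  have h1 : ∀ l', (∑ x, M i x * B x l') = (1 : Matrix n n ℝ) i l' := fun l' => by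
    have := congrFun (congrFun hMB i) l'
    simpa [Matrix.mul_apply] using this
  simp only [Matrix.mul_apply, Matrix.add_apply, Matrix.sub_apply, Matrix.smul_apply,
    Matrix.vecMulVec_apply, Matrix.single, Matrix.of_apply, smul_eq_mul, Pi.smul_apply]
  have expand : ∀ x, (M i x + lam * (if j = i ∧ j = x then (1:ℝ) else 0)) *
      (B x l - β * (B x j * B j l)) =
      ((M i x * B x l) - (β * B j l) * (M i x * B x j)) +
      (if j = i ∧ j = x then (1:ℝ) else 0) * (lam * (B x l - β * (B x j * B j l))) := by
    intro x
    ring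
  rw [Finset.sum_congr rfl (fun x _ => expand x), Finset.sum_add_distrib,
    Finset.sum_sub_distrib, ← Finset.mul_sum, h1 l, h1 j]
  have h2 : (∑ x, (if j = i ∧ j = x then (1:ℝ) else 0) * (lam * (B x l - β * (B x j * B j l))))
      = if j = i then lam * (B j l - β * (B j j * B j l)) else 0 := by
    simp [ite_and, Finset.sum_ite_eq]
  rw [h2]
  by_cases hij : j = i
  · subst hij
    rw [if_pos rfl, Matrix.one_apply_eq]
    rw [hβ]
    field_simp
    ring
  · rw [if_neg hij, Matrix.one_apply_ne (fun h => hij h.symm)]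
    ring

lemma smul_stdBasis_eq_diagonal (j : n) (lam : ℝ) :
    lam • Matrix.single j j (1:ℝ) = Matrix.diagonal (fun x => if x = j then lam else 0) := by
  ext a bb
  simp only [Matrix.smul_apply, Matrix.single, Matrix.diagonal_apply, Matrix.of_apply,
    smul_eq_mul]
  by_cases h1 : a = bb
  · subst h1
    by_cases h2 : a = j
    · subst h2; simp
    · simp only [if_neg h2]
      have : ¬(j = a ∧ j = a) := fun h => h2 h.1.symm
      simp [this]
      exact fun h => absurd h.symm h2
  · have : ¬(j = a ∧ j = bb) := by
      rintro ⟨rfl, rfl⟩; exact h1 rfl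
    simp [this, h1]

lemma pathprod {M : Matrix n n ℝ} (hM : M.PosDef)
    (hoff : ∀ i j, i ≠ j → M i j ≤ 0) :
    ∀ i j l, M⁻¹ i j * M⁻¹ j l ≤ M⁻¹ j j * M⁻¹ i l := by
  intro i j l
  set B := M⁻¹ with hB
  have Bnn : ∀ a bb, 0 ≤ B a bb := inv_nonneg_of_posdef_Z hM hoff
  have key : ∀ lam : ℝ, 0 ≤ lam → lam * (B i j * B j l) ≤ B i l * (1 + lam * B j j) := by
    intro lam hlam
    have hα : (0:ℝ) < 1 + lam * B j j := by
      have := mul_nonneg hlam (Bnn j j); linarith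
    have hd : ∀ x, (0:ℝ) ≤ (fun x => if x = j then lam else 0) x := by
      intro x; by_cases h : x = j <;> simp [h, hlam]
    have hM' : (M + lam • Matrix.single j j (1:ℝ)).PosDef := by
      rw [smul_stdBasis_eq_diagonal]
      exact posdef_add_diag hM hd
    have hoff' : ∀ a bb, a ≠ bb → (M + lam • Matrix.single j j (1:ℝ)) a bb ≤ 0 := by
      intro a bb hab
      rw [smul_stdBasis_eq_diagonal, Matrix.add_apply, Matrix.diagonal_apply_ne _ hab, add_zero]
      exact hoff a bb hab
    have hnn' := inv_nonneg_of_posdef_Z hM' hoff' i l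
    rw [SM hM.det_pos.ne'.isUnit j lam hα.ne'] at hnn'
    simp only [Matrix.sub_apply, Matrix.smul_apply, Matrix.vecMulVec_apply, smul_eq_mul, ← hB]
      at hnn'
    have h2 : lam / (1 + lam * B j j) * (B i j * B j l) ≤ B i l := by linarith
    calc lam * (B i j * B j l)
        = (lam / (1 + lam * B j j) * (B i j * B j l)) * (1 + lam * B j j) := by
          field_simp
      _ ≤ B i l * (1 + lam * B j j) := by
          apply mul_le_mul_of_nonneg_right h2 hα.le
  by_contra hcon
  push_neg at hcon
  set D := B i j * B j l - B j j * B i l with hD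
  have hDpos : 0 < D := by simp only [hD]; linarith
  have hBil : (0:ℝ) ≤ B i l := Bnn i l
  have hlam : (0:ℝ) ≤ (B i l + 1) / D := by
    apply div_nonneg (by linarith) hDpos.le
  have := key ((B i l + 1) / D) hlam
  have hexp : (B i l + 1) / D * (B i j * B j l) - (B i l + 1) / D * (B j j * B i l) = B i l + 1 := by
    field_simp [hD]
    ring
  nlinarith [this, hexp]

lemma core_ineq {p q u w t d α : ℝ} (hp : 0 ≤ p) (hq : 0 ≤ q) (hu : 0 ≤ u) (hw : 0 ≤ w)
    (ht : 0 ≤ t) (hd : 1 ≤ d) (hα : 1 ≤ α)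
    (h1 : t * u ≤ w * (d - 1)) (h2 : t * w ≤ u * (α - 1))
    (hd' : 0 < d - t ^ 2 / α) :
    (p - q * t / α) * (u - t * w / α) / (d - t ^ 2 / α) ≤ p * u / d := by
  have hd0 : (0:ℝ) < d := by linarith
  have hα0 : (0:ℝ) < α := by linarith
  rw [div_le_div_iff₀ hd' hd0]
  have hwd : 0 ≤ w * d - t * u := by nlinarith
  have huα : 0 ≤ u * α - t * w := by nlinarith
  have key : (p * α - q * t) * (u * α - t * w) * d ≤ p * u * (d * α - t ^ 2) * α := by
    nlinarith [mul_nonneg (mul_nonneg (mul_nonneg hp ht) hα0.le) hwd,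
      mul_nonneg (mul_nonneg (mul_nonneg hq ht) hd0.le) huα]
  have hα2 : (0:ℝ) < α ^ 2 := by positivity
  have e1 : (p - q * t / α) * (u - t * w / α) * d = ((p * α - q * t) * (u * α - t * w) * d) / α ^ 2 := by
    rw [eq_div_iff hα2.ne']
    field_simp
    try ring
    try exact Or.inl trivial
  have e2 : p * u * (d - t ^ 2 / α) = (p * u * (d * α - t ^ 2) * α) / α ^ 2 := by
    rw [eq_div_iff hα2.ne']
    field_simp
    try ring
    try exact Or.inl trivial
  rw [e1, e2]
  exact (div_le_div_iff_of_pos_right hα2).mpr key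

lemma marg_sum_bound {β : Type*} [DecidableEq β] (Q : Finset β) (H : Finset β → ℝ)
    (sub : ∀ (A B : Finset β), A ⊆ B → B ⊆ Q → ∀ e ∈ Q, e ∉ B →
       H (insert e B) - H B ≤ H (insert e A) - H A) :
    ∀ (R : Finset β), R ⊆ Q → ∀ A, A ⊆ Q →
      H (A ∪ R) - H A ≤ ∑ e ∈ R, (H (insert e A) - H A) := by
  intro R
  induction R using Finset.induction_on with
  | empty => intro _ A _; simp
  | insert f R' hf ih =>
    intro hRQ A hAQ
    have hfQ : f ∈ Q := hRQ (Finset.mem_insert_self f R')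
    have hR'Q : R' ⊆ Q := fun x hx => hRQ (Finset.mem_insert_of_mem hx)
    have hAR'Q : A ∪ R' ⊆ Q := Finset.union_subset hAQ hR'Q
    have hstep : H (A ∪ insert f R') - H (A ∪ R') ≤ H (insert f A) - H A := by
      rw [Finset.union_insert]
      by_cases hfA : f ∈ A ∪ R'
      · have hf2 : f ∈ A := by
          rcases Finset.mem_union.mp hfA with h | h
          · exact h
          · exact absurd h hf
        rw [Finset.insert_eq_self.mpr hfA, Finset.insert_eq_self.mpr hf2]
        simp
      · exact sub A (A ∪ R') Finset.subset_union_left hAR'Q f hfQ hfA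
    have ih2 := ih hR'Q A hAQ
    rw [Finset.sum_insert hf]
    have : H (A ∪ insert f R') - H A
        = (H (A ∪ insert f R') - H (A ∪ R')) + (H (A ∪ R') - H A) := by ring
    rw [this]
    linarith

lemma greedy_bound {β : Type*} [DecidableEq β] (Q : Finset β) (H : Finset β → ℝ)
    (mono : ∀ A B : Finset β, A ⊆ B → B ⊆ Q → H A ≤ H B)
    (sub : ∀ (A B : Finset β), A ⊆ B → B ⊆ Q → ∀ e ∈ Q, e ∉ B →
       H (insert e B) - H B ≤ H (insert e A) - H A)
    (k : ℕ) (hk0 : 0 < k)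
    (T : ℕ → Finset β) (hT0 : T 0 = ∅)
    (hgreedy : ∀ i < k, ∃ e ∈ Q \ T i, T (i+1) = insert e (T i) ∧
        ∀ e' ∈ Q \ T i, H (insert e' (T i)) - H (T i) ≤ H (insert e (T i)) - H (T i))
    (Tstar : Finset β) (hTQ : Tstar ⊆ Q) (hcard : Tstar.card = k) :
    (1 - 1 / Real.exp 1) * (H Tstar - H ∅) ≤ H (T k) - H ∅ := by
  -- T i ⊆ Q for i ≤ k
  have hTsub : ∀ i ≤ k, T i ⊆ Q := by
    intro i
    induction i with
    | zero => intro _; rw [hT0]; exact Finset.empty_subset _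
    | succ m ihm =>
      intro hm
      obtain ⟨e, he, hTeq, _⟩ := hgreedy m (by omega)
      rw [hTeq]
      exact Finset.insert_subset (Finset.mem_sdiff.mp he).1 (ihm (by omega))
  -- per-step bound
  have hstep : ∀ i < k, H Tstar - H (T i) ≤ (k : ℝ) * (H (T (i+1)) - H (T i)) := by
    intro i hik
    obtain ⟨e, he, hTeq, hmax⟩ := hgreedy i hik
    have hTiQ : T i ⊆ Q := hTsub i (le_of_lt hik)
    have hdelta0 : 0 ≤ H (T (i+1)) - H (T i) := by
      have : T i ⊆ T (i+1) := by rw [hTeq]; exact Finset.subset_insert _ _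
      have h2 : T (i+1) ⊆ Q := hTsub (i+1) (by omega)
      linarith [mono (T i) (T (i+1)) this h2]
    have h1 : H Tstar ≤ H (T i ∪ Tstar) :=
      mono Tstar (T i ∪ Tstar) Finset.subset_union_right
        (Finset.union_subset hTiQ hTQ)
    have h2 := marg_sum_bound Q H sub Tstar hTQ (T i) hTiQ
    have h3 : ∀ e' ∈ Tstar, H (insert e' (T i)) - H (T i) ≤ H (T (i+1)) - H (T i) := by
      intro e' he'
      by_cases hmem : e' ∈ T i
      · rw [Finset.insert_eq_self.mpr hmem]
        simpa using hdelta0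
      · have : e' ∈ Q \ T i := Finset.mem_sdiff.mpr ⟨hTQ he', hmem⟩
        have := hmax e' this
        rw [hTeq]
        linarith
    have h4 : ∑ e' ∈ Tstar, (H (insert e' (T i)) - H (T i))
        ≤ ∑ _e' ∈ Tstar, (H (T (i+1)) - H (T i)) :=
      Finset.sum_le_sum h3
    rw [Finset.sum_const, hcard, nsmul_eq_mul] at h4
    linarith
  -- recursion
  set r : ℝ := 1 - 1 / (k : ℝ) with hr
  have hk0' : (0:ℝ) < (k:ℝ) := by exact_mod_cast hk0
  have hr0 : 0 ≤ r := by
    rw [hr]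
    have : 1 / (k:ℝ) ≤ 1 := by
      rw [div_le_one hk0']
      exact_mod_cast hk0
    linarith
  have h0nn : 0 ≤ H Tstar - H (T 0) := by
    have := mono (T 0) Tstar (by rw [hT0]; exact Finset.empty_subset _) hTQ
    linarith
  have hrec : ∀ i ≤ k, H Tstar - H (T i) ≤ r ^ i * (H Tstar - H (T 0)) := by
    intro i
    induction i with
    | zero => intro _; simp
    | succ m ihm =>
      intro hm
      have ih2 := ihm (by omega)
      have hs := hstep m (by omega)
      -- H Tstar - H (T (m+1)) ≤ r * (H Tstar - H (T m))
      have key : H Tstar - H (T (m+1)) ≤ r * (H Tstar - H (T m)) := by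
        have hdiv : (H Tstar - H (T m)) / (k:ℝ) ≤ H (T (m+1)) - H (T m) :=
          (div_le_iff₀ hk0').mpr (by linarith [hs])
        have heq : r * (H Tstar - H (T m))
            = (H Tstar - H (T m)) - (H Tstar - H (T m)) / (k:ℝ) := by
          rw [hr]; ring
        rw [heq]
        linarith
      calc H Tstar - H (T (m+1)) ≤ r * (H Tstar - H (T m)) := key
        _ ≤ r * (r ^ m * (H Tstar - H (T 0))) := by
            apply mul_le_mul_of_nonneg_left ih2 hr0
        _ = r ^ (m+1) * (H Tstar - H (T 0)) := by ring
  have hfinal := hrec k (le_refl k)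
  -- r ^ k ≤ 1 / exp 1
  have hrk : r ^ k ≤ 1 / Real.exp 1 := by
    have h1 : r ≤ Real.exp (-(1 / (k:ℝ))) := by
      have := Real.add_one_le_exp (-(1 / (k:ℝ)))
      rw [hr]; linarith
    have h2 : r ^ k ≤ (Real.exp (-(1 / (k:ℝ)))) ^ k :=
      pow_le_pow_left₀ hr0 h1 k
    rw [← Real.exp_nat_mul] at h2
    have h3 : (k:ℝ) * (-(1 / (k:ℝ))) = -1 := by
      field_simp
    rw [h3] at h2
    rw [Real.exp_neg] at h2
    rw [one_div]
    exact h2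
  have hT0' : H (T 0) = H ∅ := by rw [hT0]
  rw [hT0'] at hfinal h0nn hrec
  have : r ^ k * (H Tstar - H ∅) ≤ (1 / Real.exp 1) * (H Tstar - H ∅) :=
    mul_le_mul_of_nonneg_right hrk h0nn
  nlinarith [hfinal, this]

lemma B_update {M : Matrix n n ℝ} (hdet : IsUnit M.det) (j0 : n)
    (hα : 1 + M⁻¹ j0 j0 ≠ 0) (a l : n) :
    (M + (1:ℝ) • Matrix.single j0 j0 (1:ℝ))⁻¹ a l
      = M⁻¹ a l - M⁻¹ a j0 * M⁻¹ j0 l / (1 + M⁻¹ j0 j0) := by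
  rw [SM hdet j0 1 (by simpa using hα)]
  simp only [Matrix.sub_apply, Matrix.smul_apply, Matrix.vecMulVec_apply, smul_eq_mul, one_mul]
  ring

lemma s_update {M : Matrix n n ℝ} (hdet : IsUnit M.det) (j0 : n)
    (hα : 1 + M⁻¹ j0 j0 ≠ 0) (i : n) :
    ∑ l, (M + (1:ℝ) • Matrix.single j0 j0 (1:ℝ))⁻¹ l i
      = (∑ l, M⁻¹ l i) - (∑ l, M⁻¹ l j0) * (M⁻¹ j0 i) / (1 + M⁻¹ j0 j0) := by
  rw [Finset.sum_congr rfl (fun l _ => B_update hdet j0 hα l i)]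
  rw [Finset.sum_sub_distrib]
  congr 1
  rw [← Finset.sum_div, ← Finset.sum_mul]

lemma x_update {M : Matrix n n ℝ} (hdet : IsUnit M.det) (j0 : n)
    (hα : 1 + M⁻¹ j0 j0 ≠ 0) (v : n → ℝ) (i : n) :
    ((M + (1:ℝ) • Matrix.single j0 j0 (1:ℝ))⁻¹ *ᵥ (v + Pi.single j0 (1:ℝ))) i
      = (M⁻¹ *ᵥ v) i + M⁻¹ i j0 * (1 - (M⁻¹ *ᵥ v) j0) / (1 + M⁻¹ j0 j0) := by
  have hx : ∀ a : n, (M⁻¹ *ᵥ v) a = ∑ l, M⁻¹ a l * v l := by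
    intro a; simp [Matrix.mulVec, dotProduct]
  have hexp : ((M + (1:ℝ) • Matrix.single j0 j0 (1:ℝ))⁻¹ *ᵥ (v + Pi.single j0 (1:ℝ))) i
      = ∑ l, (M⁻¹ i l - M⁻¹ i j0 * M⁻¹ j0 l / (1 + M⁻¹ j0 j0)) * (v l + (Pi.single j0 (1:ℝ) : n → ℝ) l) := by
    simp only [Matrix.mulVec, dotProduct, Pi.add_apply]
    exact Finset.sum_congr rfl (fun l _ => by rw [B_update hdet j0 hα i l])
  rw [hexp]
  have hsingle : ∀ (f : n → ℝ), ∑ l, f l * (Pi.single j0 (1:ℝ) : n → ℝ) l = f j0 := by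
    intro f
    rw [Finset.sum_congr rfl (fun l _ => by rw [Pi.single_apply, mul_ite, mul_one, mul_zero])]
    rw [Finset.sum_ite_eq' Finset.univ j0 f]
    simp
  have hexp2 : ∀ l, (M⁻¹ i l - M⁻¹ i j0 * M⁻¹ j0 l / (1 + M⁻¹ j0 j0)) * (v l + (Pi.single j0 (1:ℝ) : n → ℝ) l)
      = (M⁻¹ i l * v l + M⁻¹ i l * (Pi.single j0 (1:ℝ) : n → ℝ) l)
        - ((M⁻¹ i j0 / (1 + M⁻¹ j0 j0)) * (M⁻¹ j0 l * v l)
          + (M⁻¹ i j0 / (1 + M⁻¹ j0 j0)) * (M⁻¹ j0 l * (Pi.single j0 (1:ℝ) : n → ℝ) l)) := by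
    intro l; ring
  rw [Finset.sum_congr rfl (fun l _ => hexp2 l), Finset.sum_sub_distrib,
    Finset.sum_add_distrib, Finset.sum_add_distrib, ← Finset.mul_sum, ← Finset.mul_sum,
    hsingle (fun l => M⁻¹ i l), hsingle (fun l => M⁻¹ j0 l)]
  rw [hx i, hx j0]
  have hgen : ∀ (X Y t β : ℝ), 1 + β ≠ 0 →
      X + t - (t / (1 + β) * Y + t / (1 + β) * β) = X + t * (1 - Y) / (1 + β) := by
    intro X Y t β h
    field_simp
    ring
  exact hgen _ _ _ _ hα

lemma marg_formula {M : Matrix n n ℝ} (hdet : IsUnit M.det) (j0 : n)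
    (hα : 1 + M⁻¹ j0 j0 ≠ 0) (v : n → ℝ) :
    (1 : n → ℝ) ⬝ᵥ ((M + (1:ℝ) • Matrix.single j0 j0 (1:ℝ))⁻¹ *ᵥ (v + Pi.single j0 (1:ℝ)))
      - (1 : n → ℝ) ⬝ᵥ (M⁻¹ *ᵥ v)
    = (∑ l, M⁻¹ l j0) * (1 - (M⁻¹ *ᵥ v) j0) / (1 + M⁻¹ j0 j0) := by
  have h1 : ∀ (y : n → ℝ), (1 : n → ℝ) ⬝ᵥ y = ∑ i, y i := by
    intro y; simp [dotProduct]
  rw [h1, h1]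
  rw [Finset.sum_congr rfl (fun i _ => x_update hdet j0 hα v i)]
  rw [Finset.sum_add_distrib, ← Finset.sum_div, ← Finset.sum_mul]
  ring


lemma core_ineq' {p q xi xj t dii djj : ℝ} (hp : 0 ≤ p) (hq : 0 ≤ q) (hxi : xi ≤ 1) (hxj : xj ≤ 1)
    (ht : 0 ≤ t) (hdii : 0 ≤ dii) (hdjj : 0 ≤ djj)
    (h1 : t * (1 - xi) ≤ dii * (1 - xj)) (h2 : t * (1 - xj) ≤ djj * (1 - xi))
    (hd' : 0 < 1 + (dii - t * t / (1 + djj))) :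
    (p - q * t / (1 + djj)) * (1 - (xi + t * (1 - xj) / (1 + djj)))
      / (1 + (dii - t * t / (1 + djj)))
    ≤ p * (1 - xi) / (1 + dii) := by
  have e1 : 1 - (xi + t * (1 - xj) / (1 + djj)) = (1 - xi) - t * (1 - xj) / (1 + djj) := by ring
  have e2 : 1 + (dii - t * t / (1 + djj)) = (1 + dii) - t ^ 2 / (1 + djj) := by ring
  rw [e1, e2]
  rw [e2] at hd'
  refine core_ineq hp hq (by linarith) (by linarith) ht (by linarith) (by linarith) ?_ ?_ hd'
  · have : (1 - xj) * ((1 + dii) - 1) = dii * (1 - xj) := by ring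
    linarith
  · have : (1 - xi) * ((1 + djj) - 1) = djj * (1 - xi) := by ring
    linarith



/-- **Greedy guarantee.** Under the grounded Laplacian setup, let `k` be a positive integer with
`k ≤ |Q|`.  Define the greedy sequence `T₀ = ∅` and, for `0 ≤ i < k`,
`T_{i+1} = T_i ∪ {e_i}` where `e_i ∈ Q \ T_i` maximizes `H(T_i ∪ {e}) − H(T_i)` over
`e ∈ Q \ T_i`.  Then `H(T_k) − H(∅) ≥ (1 − 1/e)(H(T*) − H(∅))`, where `T*` maximizes `H`
over all subsets `P ⊆ Q` with `|P| = k`. -/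
theorem stmt15 {V : Type} [Fintype V] [DecidableEq V]
    (G : SimpleGraph V) [DecidableRel G.Adj] (hconn : G.Connected)
    (F S0 S1 : Finset V)
    (hFne : F.Nonempty) (hS1ne : S1.Nonempty)
    (hFS0 : Disjoint F S0) (hFS1 : Disjoint F S1) (hS0S1 : Disjoint S0 S1)
    (hcover : F ∪ S0 ∪ S1 = Finset.univ)
    (LF : Matrix F F ℝ)
    (hLF : LF = (G.lapMatrix ℝ).submatrix (fun i : F => (i : V)) (fun i : F => (i : V)))
    (hPD : LF.PosDef) (hnn : ∀ i j : F, 0 ≤ LF⁻¹ i j)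
    (b : F → ℝ)
    (hb : ∀ i : F, b i = ((S1.filter fun a => G.Adj a (i : V)).card : ℝ))
    (Q : Finset (V × V))
    (hQ : ∀ e ∈ Q, e.1 ∈ S1 ∧ e.2 ∈ F ∧ ¬ G.Adj e.1 e.2)
    (c : Finset (V × V) → F → ℝ)
    (hc : ∀ P, ∀ i : F, c P i = ((P.filter fun e => e.2 = (i : V)).card : ℝ))
    (H : Finset (V × V) → ℝ)
    (hH : ∀ P ⊆ Q, H P = (1 : F → ℝ) ⬝ᵥ ((LF + Matrix.diagonal (c P))⁻¹ *ᵥ (b + c P)))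
    (k : ℕ) (hk0 : 0 < k) (hkQ : k ≤ Q.card)
    (T : ℕ → Finset (V × V)) (hT0 : T 0 = ∅)
    (hgreedy : ∀ i < k, ∃ e ∈ Q \ T i,
        T (i + 1) = insert e (T i) ∧
        ∀ e' ∈ Q \ T i, H (insert e' (T i)) - H (T i) ≤ H (insert e (T i)) - H (T i))
    (Tstar : Finset (V × V)) (hTstarQ : Tstar ⊆ Q) (hTstarcard : Tstar.card = k)
    (hTstaropt : ∀ P ⊆ Q, P.card = k → H P ≤ H Tstar) :
    (1 - 1 / Real.exp 1) * (H Tstar - H ∅) ≤ H (T k) - H ∅ := by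
  classical
  have hcP : ∀ P (i : F), 0 ≤ c P i := fun P i => by rw [hc]; positivity
  have hbnn : ∀ i : F, 0 ≤ b i := fun i => by rw [hb]; positivity
  have hoffLF : ∀ i j : F, i ≠ j → LF i j ≤ 0 := by
    intro i j hij
    rw [hLF]
    simp only [Matrix.submatrix_apply]
    have hvne : (i : V) ≠ (j : V) := fun h => hij (Subtype.ext h)
    simp only [SimpleGraph.lapMatrix, SimpleGraph.degMatrix, Matrix.sub_apply,
      Matrix.diagonal_apply_ne _ hvne, SimpleGraph.adjMatrix_apply]
    by_cases hadj : G.Adj (i : V) (j : V) <;> simp [hadj]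
  have hPDP : ∀ P, (LF + Matrix.diagonal (c P)).PosDef := fun P => posdef_add_diag hPD (hcP P)
  have hoffP : ∀ P, ∀ i j : F, i ≠ j → (LF + Matrix.diagonal (c P)) i j ≤ 0 := by
    intro P i j hij
    rw [Matrix.add_apply, Matrix.diagonal_apply_ne _ hij, add_zero]
    exact hoffLF i j hij
  have hBnn : ∀ P, ∀ i j : F, 0 ≤ (LF + Matrix.diagonal (c P))⁻¹ i j :=
    fun P => inv_nonneg_of_posdef_Z (hPDP P) (hoffP P)
  have hBsym : ∀ P, ∀ i j : F, (LF + Matrix.diagonal (c P))⁻¹ i j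
      = (LF + Matrix.diagonal (c P))⁻¹ j i := by
    intro P i j
    have h := (hPDP P).1.inv
    have h2 := congrFun (congrFun h i) j
    rw [Matrix.conjTranspose_apply] at h2
    simpa using h2.symm
  have hdet : ∀ P, IsUnit (LF + Matrix.diagonal (c P)).det := fun P => (hPDP P).det_pos.ne'.isUnit
  have hrow : ∀ i : F, b i ≤ ∑ l : F, LF i l := by
    intro i
    have hiF : (i : V) ∈ F := i.2
    have hLFsum : ∑ l : F, LF i l
        = (G.degree (i : V) : ℝ) - ∑ l : F, (G.adjMatrix ℝ) (i : V) (l : V) := by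
      rw [hLF]
      simp only [Matrix.submatrix_apply, SimpleGraph.lapMatrix, Matrix.sub_apply]
      rw [Finset.sum_sub_distrib]
      congr 1
      · -- sum of degMatrix row over F = degree i
        rw [show ∑ l : F, (G.degMatrix ℝ) (i:V) (l:V)
            = ∑ l : F, (if l = i then (G.degree (i:V) : ℝ) else 0) from ?_]
        · simp
        · apply Finset.sum_congr rfl
          intro l _
          by_cases h : l = i
          · subst h; simp [SimpleGraph.degMatrix, Matrix.diagonal_apply_eq]
          · have : (i:V) ≠ (l:V) := fun hh => h (Subtype.ext hh.symm)
            rw [SimpleGraph.degMatrix, Matrix.diagonal_apply_ne _ this, if_neg h]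
    have hdeg : (G.degree (i:V) : ℝ) = ∑ v : V, (G.adjMatrix ℝ) (i:V) v := by
      simp only [SimpleGraph.adjMatrix_apply]
      rw [Finset.sum_boole]
      rw [SimpleGraph.degree, ← SimpleGraph.neighborFinset_eq_filter]
    have hsplit : ∑ v : V, (G.adjMatrix ℝ) (i:V) v
        = ∑ v ∈ F, (G.adjMatrix ℝ) (i:V) v + ∑ v ∈ S0, (G.adjMatrix ℝ) (i:V) v
          + ∑ v ∈ S1, (G.adjMatrix ℝ) (i:V) v := by
      have hd1 : Disjoint (F ∪ S0) S1 := by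
        rw [Finset.disjoint_union_left]; exact ⟨hFS1, hS0S1⟩
      rw [← hcover, Finset.sum_union hd1, Finset.sum_union hFS0]
    have hFsum : ∑ v ∈ F, (G.adjMatrix ℝ) (i:V) v = ∑ l : F, (G.adjMatrix ℝ) (i:V) (l:V) :=
      (Finset.sum_coe_sort F _).symm
    have hS1sum : b i ≤ ∑ v ∈ S1, (G.adjMatrix ℝ) (i:V) v := by
      rw [hb]
      simp only [SimpleGraph.adjMatrix_apply]
      rw [Finset.sum_boole]
      have : S1.filter (fun a => G.Adj a (i:V)) = S1.filter (fun a => G.Adj (i:V) a) := by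
        apply Finset.filter_congr
        intro a _
        simp [G.adj_comm]
      rw [this]
    have hS0sum : 0 ≤ ∑ v ∈ S0, (G.adjMatrix ℝ) (i:V) v := by
      apply Finset.sum_nonneg
      intro v _
      simp only [SimpleGraph.adjMatrix_apply]
      by_cases h : G.Adj (i:V) v <;> simp [h]
    rw [hLFsum, hdeg, hsplit, hFsum]
    linarith
  have hBM : ∀ P, (LF + Matrix.diagonal (c P))⁻¹ * (LF + Matrix.diagonal (c P)) = 1 :=
    fun P => Matrix.nonsing_inv_mul _ (hdet P)
  have hrownn : ∀ P, ∀ l : F,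
      0 ≤ (∑ m, (LF + Matrix.diagonal (c P)) l m) - (b l + c P l) := by
    intro P l
    have h1 : ∑ m, (LF + Matrix.diagonal (c P)) l m = (∑ m, LF l m) + c P l := by
      simp only [Matrix.add_apply]
      rw [Finset.sum_add_distrib]
      congr 1
      simp [Matrix.diagonal_apply, Finset.sum_ite_eq]
    rw [h1]
    have := hrow l
    linarith
  have honeminus : ∀ P, ∀ i : F,
      1 - ((LF + Matrix.diagonal (c P))⁻¹ *ᵥ (b + c P)) i
      = ∑ l, (LF + Matrix.diagonal (c P))⁻¹ i l *
          ((∑ m, (LF + Matrix.diagonal (c P)) l m) - (b l + c P l)) := by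
    intro P i
    have hone : ∑ l, (LF + Matrix.diagonal (c P))⁻¹ i l
        * (∑ m, (LF + Matrix.diagonal (c P)) l m) = 1 := by
      simp only [Finset.mul_sum]
      rw [Finset.sum_comm]
      have h2 : ∀ m, ∑ l, (LF + Matrix.diagonal (c P))⁻¹ i l * (LF + Matrix.diagonal (c P)) l m
          = (1 : Matrix F F ℝ) i m := fun m => by
        have := congrFun (congrFun (hBM P) i) m
        simpa [Matrix.mul_apply] using this
      rw [Finset.sum_congr rfl (fun m _ => (h2 m).trans (Matrix.one_apply (i := i) (j := m)))]
      simp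
    have hxdef : ((LF + Matrix.diagonal (c P))⁻¹ *ᵥ (b + c P)) i
        = ∑ l, (LF + Matrix.diagonal (c P))⁻¹ i l * (b l + c P l) := by
      simp [Matrix.mulVec, dotProduct, Pi.add_apply]
    rw [hxdef, ← hone, ← Finset.sum_sub_distrib]
    apply Finset.sum_congr rfl
    intros
    ring
  have hx1 : ∀ P, ∀ i : F, ((LF + Matrix.diagonal (c P))⁻¹ *ᵥ (b + c P)) i ≤ 1 := by
    intro P i
    have h := honeminus P i
    have h2 : 0 ≤ ∑ l, (LF + Matrix.diagonal (c P))⁻¹ i l *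
        ((∑ m, (LF + Matrix.diagonal (c P)) l m) - (b l + c P l)) :=
      Finset.sum_nonneg fun l _ => mul_nonneg (hBnn P i l) (hrownn P l)
    linarith
  have hx0 : ∀ P, ∀ i : F, 0 ≤ ((LF + Matrix.diagonal (c P))⁻¹ *ᵥ (b + c P)) i := by
    intro P i
    simp only [Matrix.mulVec, dotProduct, Pi.add_apply]
    apply Finset.sum_nonneg
    intro l _
    exact mul_nonneg (hBnn P i l) (by linarith [hbnn l, hcP P l])
  have hcins : ∀ P (e : V × V), e ∉ P → ∀ i0 : F, (i0 : V) = e.2 →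
      c (insert e P) = fun i => c P i + (if i = i0 then 1 else 0) := by
    intro P e heP i0 hi0
    funext i
    rw [hc, hc]
    rw [Finset.filter_insert]
    by_cases h : i = i0
    · subst h
      rw [if_pos (by rw [hi0]), if_pos rfl]
      rw [Finset.card_insert_of_notMem (fun hmem => heP (Finset.mem_of_mem_filter e hmem))]
      push_cast
      ring
    · have hne : ¬ (e.2 = (i : V)) := by
        rw [← hi0]
        intro hh
        exact h (Subtype.ext hh.symm)
      rw [if_neg hne, if_neg h, add_zero]
  have hMins : ∀ P (e : V × V), e ∉ P → ∀ i0 : F, (i0 : V) = e.2 →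
      LF + Matrix.diagonal (c (insert e P))
        = (LF + Matrix.diagonal (c P)) + (1:ℝ) • Matrix.single i0 i0 1 := by
    intro P e heP i0 hi0
    rw [hcins P e heP i0 hi0, smul_stdBasis_eq_diagonal, add_assoc, ← Matrix.diagonal_add]
  have hvins : ∀ P (e : V × V), e ∉ P → ∀ i0 : F, (i0 : V) = e.2 →
      (b + c (insert e P)) = (b + c P) + Pi.single i0 1 := by
    intro P e heP i0 hi0
    funext i
    rw [Pi.add_apply, Pi.add_apply, Pi.add_apply, hcins P e heP i0 hi0]
    simp only [Pi.single_apply]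
    ring
  have hdpos : ∀ P (i : F), (0:ℝ) < 1 + (LF + Matrix.diagonal (c P))⁻¹ i i :=
    fun P i => by linarith [hBnn P i i]
  have hmarg : ∀ P, P ⊆ Q → ∀ e ∈ Q, e ∉ P → ∀ i0 : F, (i0 : V) = e.2 →
      H (insert e P) - H P
        = (∑ l, (LF + Matrix.diagonal (c P))⁻¹ l i0)
          * (1 - ((LF + Matrix.diagonal (c P))⁻¹ *ᵥ (b + c P)) i0)
          / (1 + (LF + Matrix.diagonal (c P))⁻¹ i0 i0) := by
    intro P hPQ e heQ heP i0 hi0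
    have hinsQ : insert e P ⊆ Q := Finset.insert_subset heQ hPQ
    rw [hH _ hinsQ, hH _ hPQ, hMins P e heP i0 hi0, hvins P e heP i0 hi0]
    exact marg_formula (hdet P) i0 (hdpos P i0).ne' (b + c P)
  have hmono1 : ∀ P, P ⊆ Q → ∀ e ∈ Q, e ∉ P → H P ≤ H (insert e P) := by
    intro P hPQ e heQ heP
    have hm := hmarg P hPQ e heQ heP ⟨e.2, (hQ e heQ).2.1⟩ rfl
    have hs : 0 ≤ ∑ l, (LF + Matrix.diagonal (c P))⁻¹ l ⟨e.2, (hQ e heQ).2.1⟩ :=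
      Finset.sum_nonneg fun l _ => hBnn P l _
    have hu : 0 ≤ 1 - ((LF + Matrix.diagonal (c P))⁻¹ *ᵥ (b + c P)) ⟨e.2, (hQ e heQ).2.1⟩ := by
      linarith [hx1 P ⟨e.2, (hQ e heQ).2.1⟩]
    have := div_nonneg (mul_nonneg hs hu) (hdpos P ⟨e.2, (hQ e heQ).2.1⟩).le
    linarith
  have hpp : ∀ P, ∀ i j l : F, (LF + Matrix.diagonal (c P))⁻¹ i j * (LF + Matrix.diagonal (c P))⁻¹ j l
      ≤ (LF + Matrix.diagonal (c P))⁻¹ j j * (LF + Matrix.diagonal (c P))⁻¹ i l :=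
    fun P => pathprod (hPDP P) (hoffP P)
  have hcross : ∀ P, ∀ i j : F,
      (LF + Matrix.diagonal (c P))⁻¹ j i * (1 - ((LF + Matrix.diagonal (c P))⁻¹ *ᵥ (b + c P)) i)
      ≤ (LF + Matrix.diagonal (c P))⁻¹ i i * (1 - ((LF + Matrix.diagonal (c P))⁻¹ *ᵥ (b + c P)) j) := by
    intro P i j
    rw [honeminus P i, honeminus P j, Finset.mul_sum, Finset.mul_sum]
    apply Finset.sum_le_sum
    intro l _
    have h2 := mul_le_mul_of_nonneg_right (hpp P j i l) (hrownn P l)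
    nlinarith [h2]
  have hsub1 : ∀ P, P ⊆ Q → ∀ f ∈ Q, f ∉ P → ∀ e ∈ Q, e ∉ insert f P →
      H (insert e (insert f P)) - H (insert f P) ≤ H (insert e P) - H P := by
    intro P hPQ f hfQ hfP e heQ heP'
    have hfPQ : insert f P ⊆ Q := Finset.insert_subset hfQ hPQ
    have heP : e ∉ P := fun h => heP' (Finset.mem_insert_of_mem h)
    have hi0F : e.2 ∈ F := (hQ e heQ).2.1
    have hj0F : f.2 ∈ F := (hQ f hfQ).2.1
    rw [hmarg P hPQ e heQ heP ⟨e.2, hi0F⟩ rfl,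
        hmarg (insert f P) hfPQ e heQ heP' ⟨e.2, hi0F⟩ rfl]
    have hMf := hMins P f hfP ⟨f.2, hj0F⟩ rfl
    have hvf := hvins P f hfP ⟨f.2, hj0F⟩ rfl
    have hα : 1 + (LF + Matrix.diagonal (c P))⁻¹ ⟨f.2, hj0F⟩ ⟨f.2, hj0F⟩ ≠ 0 :=
      (hdpos P ⟨f.2, hj0F⟩).ne'
    have hs' : ∑ l, (LF + Matrix.diagonal (c (insert f P)))⁻¹ l ⟨e.2, hi0F⟩
        = (∑ l, (LF + Matrix.diagonal (c P))⁻¹ l ⟨e.2, hi0F⟩)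
          - (∑ l, (LF + Matrix.diagonal (c P))⁻¹ l ⟨f.2, hj0F⟩)
            * ((LF + Matrix.diagonal (c P))⁻¹ ⟨f.2, hj0F⟩ ⟨e.2, hi0F⟩)
            / (1 + (LF + Matrix.diagonal (c P))⁻¹ ⟨f.2, hj0F⟩ ⟨f.2, hj0F⟩) := by
      rw [hMf]
      exact s_update (hdet P) _ hα _
    have hx' : ((LF + Matrix.diagonal (c (insert f P)))⁻¹ *ᵥ (b + c (insert f P))) ⟨e.2, hi0F⟩
        = ((LF + Matrix.diagonal (c P))⁻¹ *ᵥ (b + c P)) ⟨e.2, hi0F⟩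
          + (LF + Matrix.diagonal (c P))⁻¹ ⟨e.2, hi0F⟩ ⟨f.2, hj0F⟩
            * (1 - ((LF + Matrix.diagonal (c P))⁻¹ *ᵥ (b + c P)) ⟨f.2, hj0F⟩)
            / (1 + (LF + Matrix.diagonal (c P))⁻¹ ⟨f.2, hj0F⟩ ⟨f.2, hj0F⟩) := by
      rw [hMf, hvf]
      exact x_update (hdet P) _ hα _ _
    have hB' : (LF + Matrix.diagonal (c (insert f P)))⁻¹ ⟨e.2, hi0F⟩ ⟨e.2, hi0F⟩
        = (LF + Matrix.diagonal (c P))⁻¹ ⟨e.2, hi0F⟩ ⟨e.2, hi0F⟩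
          - (LF + Matrix.diagonal (c P))⁻¹ ⟨e.2, hi0F⟩ ⟨f.2, hj0F⟩
            * (LF + Matrix.diagonal (c P))⁻¹ ⟨f.2, hj0F⟩ ⟨e.2, hi0F⟩
            / (1 + (LF + Matrix.diagonal (c P))⁻¹ ⟨f.2, hj0F⟩ ⟨f.2, hj0F⟩) := by
      rw [hMf]
      exact B_update (hdet P) _ hα _ _
    have hd' : (0:ℝ) < 1 + ((LF + Matrix.diagonal (c P))⁻¹ ⟨e.2, hi0F⟩ ⟨e.2, hi0F⟩
          - (LF + Matrix.diagonal (c P))⁻¹ ⟨f.2, hj0F⟩ ⟨e.2, hi0F⟩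
            * (LF + Matrix.diagonal (c P))⁻¹ ⟨f.2, hj0F⟩ ⟨e.2, hi0F⟩
            / (1 + (LF + Matrix.diagonal (c P))⁻¹ ⟨f.2, hj0F⟩ ⟨f.2, hj0F⟩)) := by
      have h0 := hdpos (insert f P) ⟨e.2, hi0F⟩
      rw [hB'] at h0
      rw [hBsym P ⟨e.2, hi0F⟩ ⟨f.2, hj0F⟩] at h0
      exact h0
    rw [hs', hx', hB']
    rw [hBsym P ⟨e.2, hi0F⟩ ⟨f.2, hj0F⟩]
    refine core_ineq' (Finset.sum_nonneg fun l _ => hBnn P l _)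
      (Finset.sum_nonneg fun l _ => hBnn P l _)
      (hx1 P _) (hx1 P _) (hBnn P _ _) (hBnn P _ _) (hBnn P _ _) ?_ ?_ hd'
    · exact hcross P ⟨e.2, hi0F⟩ ⟨f.2, hj0F⟩
    · have h := hcross P ⟨f.2, hj0F⟩ ⟨e.2, hi0F⟩
      rw [hBsym P ⟨e.2, hi0F⟩ ⟨f.2, hj0F⟩] at h
      exact h
  have hmono : ∀ A B : Finset (V × V), A ⊆ B → B ⊆ Q → H A ≤ H B := by
    have key : ∀ m : ℕ, ∀ A B : Finset (V × V), (B \ A).card = m → A ⊆ B → B ⊆ Q → H A ≤ H B := by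
      intro m
      induction m with
      | zero =>
        intro A B hcard hAB hBQ
        have h1 : B \ A = ∅ := Finset.card_eq_zero.mp hcard
        have h2 : B ⊆ A := by
          intro x hx
          by_contra hxA
          have : x ∈ B \ A := Finset.mem_sdiff.mpr ⟨hx, hxA⟩
          rw [h1] at this
          exact absurd this (Finset.notMem_empty x)
        rw [Finset.Subset.antisymm hAB h2]
      | succ m ih =>
        intro A B hcard hAB hBQ
        have hne : (B \ A).Nonempty := by rw [← Finset.card_pos, hcard]; omega
        obtain ⟨e, he⟩ := hne
        obtain ⟨heB, heA⟩ := Finset.mem_sdiff.mp he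
        have hA'B : insert e A ⊆ B := Finset.insert_subset heB hAB
        have hcard' : (B \ insert e A).card = m := by
          rw [Finset.sdiff_insert, Finset.card_erase_of_mem he, hcard]
          omega
        have h1 : H A ≤ H (insert e A) :=
          hmono1 A (fun x hx => hBQ (hAB hx)) e (hBQ heB) heA
        exact le_trans h1 (ih (insert e A) B hcard' hA'B hBQ)
    intro A B hAB hBQ
    exact key _ A B rfl hAB hBQ
  have hsub : ∀ A B : Finset (V × V), A ⊆ B → B ⊆ Q → ∀ e ∈ Q, e ∉ B →
      H (insert e B) - H B ≤ H (insert e A) - H A := by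
    have key : ∀ m : ℕ, ∀ A B : Finset (V × V), (B \ A).card = m → A ⊆ B → B ⊆ Q →
        ∀ e ∈ Q, e ∉ B → H (insert e B) - H B ≤ H (insert e A) - H A := by
      intro m
      induction m with
      | zero =>
        intro A B hcard hAB hBQ e heQ heB
        have h1 : B \ A = ∅ := Finset.card_eq_zero.mp hcard
        have h2 : B ⊆ A := by
          intro x hx
          by_contra hxA
          have : x ∈ B \ A := Finset.mem_sdiff.mpr ⟨hx, hxA⟩
          rw [h1] at this
          exact absurd this (Finset.notMem_empty x)
        rw [Finset.Subset.antisymm hAB h2]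
      | succ m ih =>
        intro A B hcard hAB hBQ e heQ heB
        have hne : (B \ A).Nonempty := by rw [← Finset.card_pos, hcard]; omega
        obtain ⟨f, hf⟩ := hne
        obtain ⟨hfB, hfA⟩ := Finset.mem_sdiff.mp hf
        have hA'B : insert f A ⊆ B := Finset.insert_subset hfB hAB
        have hcard' : (B \ insert f A).card = m := by
          rw [Finset.sdiff_insert, Finset.card_erase_of_mem hf, hcard]
          omega
        have hAQ : A ⊆ Q := fun x hx => hBQ (hAB hx)
        have heA' : e ∉ insert f A := fun h => heB (hA'B h)
        have h1 : H (insert e (insert f A)) - H (insert f A) ≤ H (insert e A) - H A :=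
          hsub1 A hAQ f (hBQ hfB) hfA e heQ heA'
        have h2 := ih (insert f A) B hcard' hA'B hBQ e heQ heB
        linarith
    intro A B hAB hBQ
    exact key _ A B rfl hAB hBQ
  exact greedy_bound Q H hmono hsub k hk0 T hT0 hgreedy Tstar hTstarQ hTstarcard
end

section
/- (Approximate greedy guarantee) Under the grounded Laplacian setup, let k be a positive integer with k ≤ |Q| and let 0 < ε < 1/2. Suppose T₀ = ∅ and, for 0 ≤ i < k, T_{i+1} = T_i ∪ {e_i} for some e_i ∈ Q \ T_i satisfying H(T_i ∪ {e_i}) − H(T_i) ≥ (1−ε) · max_{e ∈ Q \ T_i} (H(T_i ∪ {e}) − H(T_i)). Then H(T_k) − H(∅) ≥ (1 − 1/e − ε) · (H(T*) − H(∅)), where T* maximizes H over all subsets P ⊆ Q with |P| = k, and e is Euler's number. -/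
set_option linter.unusedSectionVars false
set_option maxHeartbeats 1000000

open Matrix Finset

section Stieltjes

variable {ι : Type*} [Fintype ι] [DecidableEq ι]

/-- The sign lemma for Stieltjes matrices. -/
lemma stiel_sign {M : Matrix ι ι ℝ} (hM : M.PosDef)
    (hoff : ∀ i j : ι, i ≠ j → M i j ≤ 0) {v f : ι → ℝ}
    (hMv : M *ᵥ v = f) (hf : ∀ k, v k < 0 → 0 ≤ f k) : ∀ k, 0 ≤ v k := by
  by_contra hcon
  push_neg at hcon
  obtain ⟨k0, hk0⟩ := hcon
  set p : ι → ℝ := fun k => max (-v k) 0 with hp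
  have hpnn : ∀ k, 0 ≤ p k := fun k => le_max_right _ _
  have hpne : p ≠ 0 := by
    intro h
    have := congrFun h k0
    simp only [hp, Pi.zero_apply, max_eq_right_iff] at this
    linarith
  have hpos := hM.dotProduct_mulVec_pos hpne
  rw [star_trivial] at hpos
  set vp : ι → ℝ := fun k => max (v k) 0 with hvp
  have hvpnn : ∀ k, 0 ≤ vp k := fun k => le_max_right _ _
  have hsplit : vp = v + p := by
    funext k
    simp only [hvp, hp, Pi.add_apply]
    rcases le_total (v k) 0 with h | h
    · rw [max_eq_right h, max_eq_left (by linarith)]; ring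
    · rw [max_eq_left h, max_eq_right (by linarith)]; ring
  have horth : ∀ k, p k * vp k = 0 := by
    intro k
    rcases le_total (v k) 0 with h | h
    · simp [hvp, max_eq_right h]
    · simp [hp, max_eq_right (by linarith : -v k ≤ 0)]
  have h1 : 0 ≤ p ⬝ᵥ f := by
    apply Finset.sum_nonneg
    intro k _
    rcases lt_or_ge (v k) 0 with h | h
    · exact mul_nonneg (hpnn k) (hf k h)
    · have : p k = 0 := by simp [hp, max_eq_right (by linarith : -v k ≤ 0)]
      simp [this]
  have h2 : p ⬝ᵥ (M *ᵥ vp) ≤ 0 := by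
    have : p ⬝ᵥ (M *ᵥ vp) = ∑ k, ∑ l, p k * (M k l * vp l) := by
      simp [dotProduct, mulVec, Finset.mul_sum]
    rw [this]
    apply Finset.sum_nonpos
    intro k _
    apply Finset.sum_nonpos
    intro l _
    rcases eq_or_ne k l with rfl | hkl
    · rw [mul_comm (M k k) (vp k), ← mul_assoc, horth k, zero_mul]
    · have hle : p k * (M k l * vp l) = M k l * (p k * vp l) := by ring
      rw [hle]
      exact mul_nonpos_of_nonpos_of_nonneg (hoff k l hkl) (mul_nonneg (hpnn k) (hvpnn l))
  have h3 : p ⬝ᵥ (M *ᵥ p) ≤ 0 := by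
    have hmv : M *ᵥ p = M *ᵥ vp - f := by
      rw [hsplit, mulVec_add, hMv]; abel
    rw [hmv, dotProduct_sub]
    linarith
  linarith


variable {M : Matrix ι ι ℝ} (hM : M.PosDef) (hoff : ∀ i j : ι, i ≠ j → M i j ≤ 0)

lemma stiel_solve (hdet : IsUnit M.det) (g : ι → ℝ) : M *ᵥ (M⁻¹ *ᵥ g) = g := by
  rw [mulVec_mulVec, Matrix.mul_nonsing_inv _ hdet, one_mulVec]

include hM hoff in
lemma stiel_inv_entry_nonneg (i j : ι) : 0 ≤ M⁻¹ i j := by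
  have hdet : IsUnit M.det := (Matrix.isUnit_iff_isUnit_det M).mp hM.isUnit
  have h := stiel_sign hM hoff (stiel_solve hdet (Pi.single j 1))
    (fun k _ => by
      rcases eq_or_ne k j with rfl | h
      · simp
      · simp [Pi.single_eq_of_ne h])
  have h2 := h i
  rw [mulVec_single] at h2
  simpa using h2

include hM hoff in
lemma stiel_mulVec_nonneg {g : ι → ℝ} (hg : ∀ k, 0 ≤ g k) (i : ι) :
    0 ≤ (M⁻¹ *ᵥ g) i := by
  apply Finset.sum_nonneg
  intro k _
  exact mul_nonneg (stiel_inv_entry_nonneg hM hoff i k) (hg k)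

include hM hoff in
lemma stiel_pp (i j k : ι) : M⁻¹ k i * M⁻¹ i j ≤ M⁻¹ i i * M⁻¹ k j := by
  rcases eq_or_ne i j with rfl | hij
  · rw [mul_comm]
  have hdet : IsUnit M.det := (Matrix.isUnit_iff_isUnit_det M).mp hM.isUnit
  have hnn := stiel_inv_entry_nonneg hM hoff
  set v : ι → ℝ := fun l => M⁻¹ i i * M⁻¹ l j - M⁻¹ i j * M⁻¹ l i with hv
  set f : ι → ℝ := M⁻¹ i i • (Pi.single j 1 : ι → ℝ) - M⁻¹ i j • (Pi.single i 1 : ι → ℝ)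
    with hfd
  have hMv : M *ᵥ v = f := by
    have hvdef : v = M⁻¹ i i • (M⁻¹ *ᵥ (Pi.single j 1 : ι → ℝ))
        - M⁻¹ i j • (M⁻¹ *ᵥ (Pi.single i 1 : ι → ℝ)) := by
      funext l
      simp [hv, mul_comm]
    rw [hvdef, mulVec_sub, mulVec_smul, mulVec_smul, stiel_solve hdet, stiel_solve hdet, hfd]
  have hcond : ∀ l, v l < 0 → 0 ≤ f l := by
    intro l hl
    by_cases hli : l = i
    · exfalso
      have hz : v l = 0 := by rw [hv]; simp only [hli]; ring
      rw [hz] at hl; exact lt_irrefl _ hl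
    · by_cases hlj : l = j
      · have : f l = M⁻¹ i i := by
          rw [hfd]
          simp [hlj, Pi.single_eq_of_ne hli, Pi.single_eq_of_ne (Ne.symm hij)]
        rw [this]; exact hnn i i
      · have : f l = 0 := by
          rw [hfd]
          simp [Pi.single_eq_of_ne hli, Pi.single_eq_of_ne hlj]
        rw [this]
  have hsign := stiel_sign hM hoff hMv hcond k
  rw [hv] at hsign
  simp only at hsign
  linarith

include hM hoff in
lemma stiel_pp_vec (hsymm : ∀ i j : ι, M⁻¹ i j = M⁻¹ j i) {g : ι → ℝ}
    (hg : ∀ k, 0 ≤ g k) (i j : ι) :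
    M⁻¹ i j * (M⁻¹ *ᵥ g) j ≤ M⁻¹ j j * (M⁻¹ *ᵥ g) i := by
  simp only [mulVec, dotProduct, Finset.mul_sum]
  apply Finset.sum_le_sum
  intro k _
  have : M⁻¹ i j * M⁻¹ j k ≤ M⁻¹ j j * M⁻¹ i k := by
    have hpp := stiel_pp hM hoff j i k
    rw [hsymm i j, hsymm i k]
    calc M⁻¹ j i * M⁻¹ j k = M⁻¹ k j * M⁻¹ j i := by rw [hsymm j k]; ring
    _ ≤ M⁻¹ j j * M⁻¹ k i := hpp
  calc M⁻¹ i j * (M⁻¹ j k * g k) = (M⁻¹ i j * M⁻¹ j k) * g k := by ring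
  _ ≤ (M⁻¹ j j * M⁻¹ i k) * g k := mul_le_mul_of_nonneg_right this (hg k)
  _ = M⁻¹ j j * (M⁻¹ i k * g k) := by ring


lemma stiel_update (hdetM : IsUnit M.det) {j : ι}
    (hdetN : IsUnit (M + diagonal (Pi.single j 1)).det)
    (hjj : 0 ≤ M⁻¹ j j) (g : ι → ℝ) :
    (M + diagonal (Pi.single j 1))⁻¹ *ᵥ g
      = M⁻¹ *ᵥ g - (((M⁻¹ *ᵥ g) j) / (1 + M⁻¹ j j)) • (M⁻¹ *ᵥ (Pi.single j 1 : ι → ℝ)) := by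
  set N := M + diagonal (Pi.single j 1) with hN
  set y := M⁻¹ *ᵥ g with hy
  set w := M⁻¹ *ᵥ (Pi.single j 1 : ι → ℝ) with hw
  have hwj : w j = M⁻¹ j j := by rw [hw, mulVec_single]; simp
  have hα : (1 : ℝ) + M⁻¹ j j ≠ 0 := by linarith
  set t := y j / (1 + M⁻¹ j j) with ht
  have key : N *ᵥ (y - t • w) = g := by
    funext k
    have h1 : (N *ᵥ (y - t • w)) k
        = (M *ᵥ (y - t • w)) k + (Pi.single j 1 : ι → ℝ) k * (y k - t * w k) := by
      rw [hN, add_mulVec]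
      simp [mulVec_diagonal]
    have h2 : (M *ᵥ (y - t • w)) k = g k - t * (Pi.single j 1 : ι → ℝ) k := by
      rw [mulVec_sub, mulVec_smul, hy, hw, stiel_solve hdetM, stiel_solve hdetM]
      simp
    rw [h1, h2]
    by_cases hkj : k = j
    · subst hkj
      rw [Pi.single_eq_same, hwj]
      have htm : t * (1 + M⁻¹ k k) = y k := by rw [ht]; exact div_mul_cancel₀ (y k) hα
      linear_combination -htm
    · rw [Pi.single_eq_of_ne hkj]
      ring
  have h3 := congrArg (fun z => N⁻¹ *ᵥ z) key
  simp only [mulVec_mulVec, Matrix.nonsing_inv_mul _ hdetN, one_mulVec] at h3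
  rw [← h3]


lemma stiel_inv_mulVec_eq (hdet : IsUnit M.det) {z g : ι → ℝ} (h : M *ᵥ z = g) :
    M⁻¹ *ᵥ g = z := by
  rw [← h, mulVec_mulVec, Matrix.nonsing_inv_mul _ hdet, one_mulVec]

lemma stiel_inv_symm (hsymm : Mᵀ = M) (a b : ι) : M⁻¹ a b = M⁻¹ b a := by
  have h : M⁻¹ᵀ = M⁻¹ := by rw [Matrix.transpose_nonsing_inv, hsymm]
  calc M⁻¹ a b = M⁻¹ᵀ b a := rfl
  _ = M⁻¹ b a := by rw [h]

include hM hoff in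
/-- The marginal gain formula. -/
lemma stiel_gain_formula (hsymm : Mᵀ = M) (i : ι)
    (hN : (M + diagonal (Pi.single i 1)).PosDef) (g : ι → ℝ) :
    (1 : ι → ℝ) ⬝ᵥ ((M + diagonal (Pi.single i 1))⁻¹ *ᵥ (g + Pi.single i 1))
      - (1 : ι → ℝ) ⬝ᵥ (M⁻¹ *ᵥ g)
    = (M⁻¹ *ᵥ 1) i * (1 - (M⁻¹ *ᵥ g) i) / (1 + M⁻¹ i i) := by
  have hdetM : IsUnit M.det := (Matrix.isUnit_iff_isUnit_det M).mp hM.isUnit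
  have hdetN : IsUnit (M + diagonal (Pi.single i 1)).det :=
    (Matrix.isUnit_iff_isUnit_det _).mp hN.isUnit
  have hsymminv := stiel_inv_symm (M := M) hsymm
  have hii := stiel_inv_entry_nonneg hM hoff i i
  have hα : (0:ℝ) < 1 + M⁻¹ i i := by linarith
  have hαne : (1:ℝ) + M⁻¹ i i ≠ 0 := ne_of_gt hα
  set x := M⁻¹ *ᵥ g with hx
  set w := M⁻¹ *ᵥ (Pi.single i 1 : ι → ℝ) with hw
  have hwk : ∀ k, w k = M⁻¹ k i := by intro k; rw [hw, mulVec_single]; simp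
  have hupd := stiel_update hdetM hdetN hii (g + Pi.single i 1)
  have hsum : (M + diagonal (Pi.single i 1))⁻¹ *ᵥ (g + Pi.single i 1)
      = x + (((1 : ℝ) - x i) / (1 + M⁻¹ i i)) • w := by
    rw [hupd, mulVec_add, ← hx, ← hw]
    funext k
    simp only [Pi.add_apply, Pi.sub_apply, Pi.smul_apply, smul_eq_mul, hwk]
    linear_combination (-(M⁻¹ k i)) * mul_inv_cancel₀ hαne
  have hdot : (1 : ι → ℝ) ⬝ᵥ w = (M⁻¹ *ᵥ 1) i := by
    simp only [dotProduct, Pi.one_apply, one_mul, mulVec, mul_one]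
    exact Finset.sum_congr rfl fun k _ => by rw [hwk k, hsymminv k i]
  rw [hsum, dotProduct_add, dotProduct_smul, hdot, smul_eq_mul]
  ring

include hM hoff in
/-- Marginal gains decrease when the diagonal grows: the core submodularity estimate. -/
lemma stiel_gain_mono (hsymm : Mᵀ = M) (i j : ι)
    (hN : (M + diagonal (Pi.single j 1)).PosDef)
    {r : ι → ℝ} (hr : ∀ k, 0 ≤ r k) :
    ((M + diagonal (Pi.single j 1 : ι → ℝ))⁻¹ *ᵥ (1 : ι → ℝ)) i
        * ((M + diagonal (Pi.single j 1 : ι → ℝ))⁻¹ *ᵥ r) i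
        / (1 + (M + diagonal (Pi.single j 1 : ι → ℝ))⁻¹ i i)
      ≤ (M⁻¹ *ᵥ (1 : ι → ℝ)) i * (M⁻¹ *ᵥ r) i / (1 + M⁻¹ i i) := by
  set N := M + diagonal (Pi.single j 1 : ι → ℝ) with hNdef
  have hoffN : ∀ a b : ι, a ≠ b → N a b ≤ 0 := by
    intro a b hab
    rw [hNdef]
    simp only [Matrix.add_apply, diagonal_apply_ne _ hab]
    simpa using hoff a b hab
  have hdetM : IsUnit M.det := (Matrix.isUnit_iff_isUnit_det M).mp hM.isUnit
  have hdetN : IsUnit N.det := (Matrix.isUnit_iff_isUnit_det _).mp hN.isUnit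
  have hsymminv := stiel_inv_symm (M := M) hsymm
  have hjj := stiel_inv_entry_nonneg hM hoff j j
  have huii := stiel_inv_entry_nonneg hM hoff i i
  set s := M⁻¹ *ᵥ (1 : ι → ℝ) with hs
  set ρ := M⁻¹ *ᵥ r with hρ
  set w := M⁻¹ *ᵥ (Pi.single j 1 : ι → ℝ) with hw
  have hwk : ∀ k, w k = M⁻¹ k j := by intro k; rw [hw, mulVec_single]; simp
  set W := w i with hW
  set α := (1:ℝ) + M⁻¹ j j with hα
  have hαpos : 0 < α := by rw [hα]; linarith
  have hαne : α ≠ 0 := ne_of_gt hαpos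
  -- nonnegativity facts
  have hsi : 0 ≤ s i := stiel_mulVec_nonneg hM hoff (fun k => by simp) i
  have hsj : 0 ≤ s j := stiel_mulVec_nonneg hM hoff (fun k => by simp) j
  have hρi : 0 ≤ ρ i := stiel_mulVec_nonneg hM hoff hr i
  have hρj : 0 ≤ ρ j := stiel_mulVec_nonneg hM hoff hr j
  have hWnn : 0 ≤ W := by rw [hW, hwk i]; exact stiel_inv_entry_nonneg hM hoff i j
  have hNii : 0 ≤ N⁻¹ i i := stiel_inv_entry_nonneg hN hoffN i i
  -- update formulas
  have e1 : (N⁻¹ *ᵥ (1 : ι → ℝ)) i = (s i * α - s j * W) / α := by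
    rw [hNdef, stiel_update hdetM hdetN hjj, ← hs, ← hw]
    simp only [Pi.sub_apply, Pi.smul_apply, smul_eq_mul, ← hW, ← hα]
    field_simp
  have e2 : (N⁻¹ *ᵥ r) i = (ρ i * α - ρ j * W) / α := by
    rw [hNdef, stiel_update hdetM hdetN hjj, ← hρ, ← hw]
    simp only [Pi.sub_apply, Pi.smul_apply, smul_eq_mul, ← hW, ← hα]
    field_simp
  have e3 : N⁻¹ i i = (M⁻¹ i i * α - W ^ 2) / α := by
    have h5 : N⁻¹ i i = (N⁻¹ *ᵥ (Pi.single i 1 : ι → ℝ)) i := by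
      rw [mulVec_single]; simp
    have h6 : (M⁻¹ *ᵥ (Pi.single i 1 : ι → ℝ)) j = W := by
      rw [hW, hwk i, mulVec_single]
      simp [hsymminv j i]
    have h7 : (M⁻¹ *ᵥ (Pi.single i 1 : ι → ℝ)) i = M⁻¹ i i := by
      rw [mulVec_single]; simp
    rw [h5, hNdef, stiel_update hdetM hdetN hjj, ← hw]
    simp only [Pi.sub_apply, Pi.smul_apply, smul_eq_mul, h6, h7, ← hW, ← hα]
    field_simp
  -- path-product inequalities
  have hpp1 : W * ρ i ≤ M⁻¹ i i * ρ j := by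
    have h := stiel_pp_vec hM hoff hsymminv hr j i
    rw [hW, hwk i]
    calc M⁻¹ i j * ρ i = M⁻¹ j i * (M⁻¹ *ᵥ r) i := by rw [hsymminv i j, hρ]
    _ ≤ M⁻¹ i i * (M⁻¹ *ᵥ r) j := h
    _ = M⁻¹ i i * ρ j := by rw [hρ]
  have hpp2 : W * ρ j ≤ M⁻¹ j j * ρ i := by
    have h := stiel_pp_vec hM hoff hsymminv hr i j
    rw [hW, hwk i]
    calc M⁻¹ i j * ρ j = M⁻¹ i j * (M⁻¹ *ᵥ r) j := by rw [hρ]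
    _ ≤ M⁻¹ j j * (M⁻¹ *ᵥ r) i := h
    _ = M⁻¹ j j * ρ i := by rw [hρ]
  -- clear denominators
  have hScpos : 0 < (1 + M⁻¹ i i) * α - W ^ 2 := by
    have h8 : 0 < 1 + N⁻¹ i i := by linarith
    rw [e3] at h8
    have h9 : 0 < α * (1 + (M⁻¹ i i * α - W ^ 2) / α) := by positivity
    calc (0:ℝ) < α * (1 + (M⁻¹ i i * α - W ^ 2) / α) := h9
    _ = (1 + M⁻¹ i i) * α - W ^ 2 := by field_simp; ring
  have hMiipos : (0:ℝ) < 1 + M⁻¹ i i := by linarith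
  rw [e1, e2, e3]
  have lhseq : (s i * α - s j * W) / α * ((ρ i * α - ρ j * W) / α)
      / (1 + (M⁻¹ i i * α - W ^ 2) / α)
      = (s i * α - s j * W) * (ρ i * α - ρ j * W) / (α * ((1 + M⁻¹ i i) * α - W ^ 2)) := by
    rw [div_mul_div_comm, div_div]
    congr 1
    field_simp
    ring
  rw [lhseq, div_le_div_iff₀ (by positivity) hMiipos]
  -- the core polynomial inequality
  have t1 : s i * W * α * (W * ρ i) ≤ s i * W * α * ((1 + M⁻¹ i i) * ρ j) := by
    apply mul_le_mul_of_nonneg_left _ (by positivity)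
    calc W * ρ i ≤ M⁻¹ i i * ρ j := hpp1
    _ ≤ (1 + M⁻¹ i i) * ρ j := by nlinarith
  have t2 : s j * W * (1 + M⁻¹ i i) * (W * ρ j) ≤ s j * W * (1 + M⁻¹ i i) * (α * ρ i) := by
    apply mul_le_mul_of_nonneg_left _ (by positivity)
    calc W * ρ j ≤ M⁻¹ j j * ρ i := hpp2
    _ ≤ α * ρ i := by rw [hα]; nlinarith
  nlinarith [t1, t2, mul_nonneg hsi hρi, mul_nonneg hsj hρj]

end Stieltjes

/-- **Approximate greedy guarantee.** Under the grounded Laplacian setup, let `k` be a positive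
integer with `k ≤ |Q|` and `0 < ε < 1/2`.  Suppose `T₀ = ∅` and, for `0 ≤ i < k`,
`T_{i+1} = T_i ∪ {e_i}` for some `e_i ∈ Q \ T_i` with
`H(T_i ∪ {e_i}) − H(T_i) ≥ (1−ε) · max_{e ∈ Q \ T_i} (H(T_i ∪ {e}) − H(T_i))`.
Then `H(T_k) − H(∅) ≥ (1 − 1/e − ε)(H(T*) − H(∅))`, where `T*` maximizes `H` over all
subsets `P ⊆ Q` with `|P| = k`. -/
theorem stmt16 {V : Type} [Fintype V] [DecidableEq V]
    (G : SimpleGraph V) [DecidableRel G.Adj] (hconn : G.Connected)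
    (F S0 S1 : Finset V)
    (hFne : F.Nonempty) (hS1ne : S1.Nonempty)
    (hFS0 : Disjoint F S0) (hFS1 : Disjoint F S1) (hS0S1 : Disjoint S0 S1)
    (hcover : F ∪ S0 ∪ S1 = Finset.univ)
    (LF : Matrix F F ℝ)
    (hLF : LF = (G.lapMatrix ℝ).submatrix (fun i : F => (i : V)) (fun i : F => (i : V)))
    (hPD : LF.PosDef) (hnn : ∀ i j : F, 0 ≤ LF⁻¹ i j)
    (b : F → ℝ)
    (hb : ∀ i : F, b i = ((S1.filter fun a => G.Adj a (i : V)).card : ℝ))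
    (Q : Finset (V × V))
    (hQ : ∀ e ∈ Q, e.1 ∈ S1 ∧ e.2 ∈ F ∧ ¬ G.Adj e.1 e.2)
    (c : Finset (V × V) → F → ℝ)
    (hc : ∀ P, ∀ i : F, c P i = ((P.filter fun e => e.2 = (i : V)).card : ℝ))
    (H : Finset (V × V) → ℝ)
    (hH : ∀ P ⊆ Q, H P = (1 : F → ℝ) ⬝ᵥ ((LF + Matrix.diagonal (c P))⁻¹ *ᵥ (b + c P)))
    (k : ℕ) (hk0 : 0 < k) (hkQ : k ≤ Q.card)
    (ε : ℝ) (hε0 : 0 < ε) (hε : ε < 1 / 2)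
    (T : ℕ → Finset (V × V)) (hT0 : T 0 = ∅)
    (hgreedy : ∀ i < k, ∃ e ∈ Q \ T i,
        T (i + 1) = insert e (T i) ∧
        ∀ e' ∈ Q \ T i,
          (1 - ε) * (H (insert e' (T i)) - H (T i)) ≤ H (insert e (T i)) - H (T i))
    (Tstar : Finset (V × V)) (hTstarQ : Tstar ⊆ Q) (hTstarcard : Tstar.card = k)
    (hTstaropt : ∀ P ⊆ Q, P.card = k → H P ≤ H Tstar) :
    (1 - 1 / Real.exp 1 - ε) * (H Tstar - H ∅) ≤ H (T k) - H ∅ := by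
  classical
  -- ## Facts about LF
  have hLFsymm : LFᵀ = LF := by
    rw [hLF]
    ext a c'
    simp only [Matrix.transpose_apply, Matrix.submatrix_apply]
    exact (G.isSymm_lapMatrix (R := ℝ)).apply _ _
  have hoffLF : ∀ i j : {x // x ∈ F}, i ≠ j → LF i j ≤ 0 := by
    intro i j hij
    have hne : (i : V) ≠ (j : V) := Subtype.coe_injective.ne hij
    rw [hLF]
    simp only [Matrix.submatrix_apply, SimpleGraph.lapMatrix, Matrix.sub_apply,
      SimpleGraph.degMatrix, Matrix.diagonal_apply_ne _ hne, SimpleGraph.adjMatrix_apply]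
    split <;> norm_num
  have hbnn : ∀ i, 0 ≤ b i := fun i => by rw [hb]; positivity
  -- ## The slack vector r
  set r : {x // x ∈ F} → ℝ := fun i => (LF *ᵥ (1 : F → ℝ)) i - b i with hrdef
  have hrnn : ∀ i, 0 ≤ r i := by
    intro i
    rw [hrdef]
    simp only
    have hrow : (LF *ᵥ (1 : F → ℝ)) i = ∑ j ∈ F, G.lapMatrix ℝ (i : V) j := by
      rw [hLF]
      simp only [mulVec, dotProduct, Pi.one_apply, mul_one, Matrix.submatrix_apply]
      exact Finset.sum_coe_sort F (fun j => G.lapMatrix ℝ (i : V) j)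
    have h0 : ∑ j : V, G.lapMatrix ℝ (i : V) j = 0 := by
      have h := congrFun (G.lapMatrix_mulVec_const_eq_zero (R := ℝ)) (i : V)
      simpa [mulVec, dotProduct] using h
    have hdisj1 : Disjoint (F ∪ S0) S1 := Finset.disjoint_union_left.mpr ⟨hFS1, hS0S1⟩
    have hsplit : ∑ j ∈ F, G.lapMatrix ℝ (i:V) j + ∑ j ∈ S0, G.lapMatrix ℝ (i:V) j
        + ∑ j ∈ S1, G.lapMatrix ℝ (i:V) j = 0 := by
      rw [← Finset.sum_union hFS0, ← Finset.sum_union hdisj1, hcover]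
      exact h0
    have hout : ∀ j', j' ∈ S0 ∪ S1 → G.lapMatrix ℝ (i:V) j' = -(if G.Adj (i:V) j' then (1:ℝ) else 0) := by
      intro j' hj'
      have hne : (i:V) ≠ j' := by
        intro h
        have hiF : (i:V) ∈ F := i.2
        rw [h] at hiF
        rcases Finset.mem_union.mp hj' with h' | h'
        · exact (Finset.disjoint_left.mp hFS0 hiF) h'
        · exact (Finset.disjoint_left.mp hFS1 hiF) h'
      simp [SimpleGraph.lapMatrix, SimpleGraph.degMatrix, Matrix.sub_apply,
        Matrix.diagonal_apply_ne _ hne, SimpleGraph.adjMatrix_apply]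
    have hS0v : ∑ j' ∈ S0, G.lapMatrix ℝ (i:V) j'
        = -∑ j' ∈ S0, (if G.Adj (i:V) j' then (1:ℝ) else 0) := by
      rw [← Finset.sum_neg_distrib]
      exact Finset.sum_congr rfl fun j' hj' => hout j' (Finset.mem_union_left _ hj')
    have hS1v : ∑ j' ∈ S1, G.lapMatrix ℝ (i:V) j'
        = -∑ j' ∈ S1, (if G.Adj (i:V) j' then (1:ℝ) else 0) := by
      rw [← Finset.sum_neg_distrib]
      exact Finset.sum_congr rfl fun j' hj' => hout j' (Finset.mem_union_right _ hj')
    have hS1b : ∑ j' ∈ S1, (if G.Adj (i:V) j' then (1:ℝ) else 0) = b i := by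
      rw [Finset.sum_boole, hb]
      norm_cast
      congr 1
      apply Finset.filter_congr
      intro a _
      simp [G.adj_comm]
    have hS0nn : 0 ≤ ∑ j' ∈ S0, (if G.Adj (i:V) j' then (1:ℝ) else 0) :=
      Finset.sum_nonneg (fun j' _ => by split <;> norm_num)
    rw [hrow]
    linarith [hsplit, hS0v, hS1v, hS1b, hS0nn]
  -- ## Facts about shifted matrices LF + diagonal d
  have hMpos : ∀ dd : {x // x ∈ F} → ℝ, (∀ i, 0 ≤ dd i) → (LF + diagonal dd).PosDef :=
    fun dd hdd => hPD.add_posSemidef (Matrix.posSemidef_diagonal_iff.mpr fun i => hdd i)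
  have hMoff : ∀ (dd : {x // x ∈ F} → ℝ) (i j), i ≠ j → (LF + diagonal dd) i j ≤ 0 := by
    intro dd i j hij
    simp only [Matrix.add_apply, Matrix.diagonal_apply_ne _ hij]
    simpa using hoffLF i j hij
  have hMsymm : ∀ dd : {x // x ∈ F} → ℝ, (LF + diagonal dd)ᵀ = LF + diagonal dd := by
    intro dd; rw [Matrix.transpose_add, Matrix.diagonal_transpose, hLFsymm]
  have hMone : ∀ dd : {x // x ∈ F} → ℝ, (LF + diagonal dd) *ᵥ (1 : F → ℝ) = LF *ᵥ 1 + dd := by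
    intro dd; funext i
    rw [Matrix.add_mulVec]
    simp [Matrix.mulVec_diagonal]
  have hρeq : ∀ dd : {x // x ∈ F} → ℝ, (∀ i, 0 ≤ dd i) → ∀ i,
      ((LF + diagonal dd)⁻¹ *ᵥ r) i = 1 - ((LF + diagonal dd)⁻¹ *ᵥ (b + dd)) i := by
    intro dd hdd i
    have hdet : IsUnit (LF + diagonal dd).det :=
      (Matrix.isUnit_iff_isUnit_det _).mp (hMpos dd hdd).isUnit
    have hz : (LF + diagonal dd) *ᵥ ((1 : F → ℝ) - (LF + diagonal dd)⁻¹ *ᵥ (b + dd)) = r := by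
      rw [Matrix.mulVec_sub, stiel_solve hdet, hMone]
      funext kk
      simp only [Pi.sub_apply, Pi.add_apply, hrdef]
      ring
    rw [stiel_inv_mulVec_eq hdet hz]
    simp
  -- ## Set-level facts
  have hsing : ∀ (a i : {x // x ∈ F}), 0 ≤ (Pi.single a 1 : {x // x ∈ F} → ℝ) i := by
    intro a i
    rcases eq_or_ne i a with rfl | h
    · simp
    · simp [Pi.single_eq_of_ne h]
  have hcnn : ∀ P (i : {x // x ∈ F}), 0 ≤ c P i := fun P i => by rw [hc]; positivity
  have hcins : ∀ (P : Finset (V × V)) (e : V × V), e ∉ P → ∀ (i2 : {x // x ∈ F}),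
      (i2 : V) = e.2 → c (insert e P) = c P + Pi.single i2 1 := by
    intro P e heP i2 hi2
    funext i
    rw [Pi.add_apply, hc, hc, Finset.filter_insert]
    by_cases h : e.2 = (i : V)
    · rw [if_pos h]
      rw [Finset.card_insert_of_notMem (fun hmem => heP (Finset.mem_of_mem_filter e hmem))]
      have hii : i2 = i := Subtype.ext (by rw [hi2, h])
      rw [hii, Pi.single_eq_same]
      push_cast
      ring
    · rw [if_neg h]
      have hne : i ≠ i2 := fun hh => h (by rw [← hi2, hh])
      rw [Pi.single_eq_of_ne hne]
      ring
  have hgainformula : ∀ P, P ⊆ Q → ∀ e ∈ Q, e ∉ P → ∀ (i2 : {x // x ∈ F}), (i2:V) = e.2 →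
      H (insert e P) - H P
        = ((LF + diagonal (c P))⁻¹ *ᵥ (1 : F → ℝ)) i2
          * ((LF + diagonal (c P))⁻¹ *ᵥ r) i2 / (1 + (LF + diagonal (c P))⁻¹ i2 i2) := by
    intro P hPQ e heQ heP i2 hi2
    have hPQ' : insert e P ⊆ Q := Finset.insert_subset heQ hPQ
    have hMP := hMpos (c P) (hcnn P)
    have hMN : ((LF + diagonal (c P)) + diagonal (Pi.single i2 1)).PosDef := by
      rw [add_assoc, Matrix.diagonal_add]
      exact hMpos _ (fun i => add_nonneg (hcnn P i) (hsing _ i))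
    have hform := stiel_gain_formula hMP (hMoff (c P)) (hMsymm (c P)) i2 hMN (b + c P)
    rw [hH _ hPQ', hH _ hPQ, hcins P e heP i2 hi2]
    have hdiag : Matrix.diagonal (c P + Pi.single i2 1)
        = diagonal (c P) + diagonal (Pi.single i2 1) := (Matrix.diagonal_add _ _).symm
    have hvec : b + (c P + Pi.single i2 1) = (b + c P) + Pi.single i2 1 := by
      rw [add_assoc]
    rw [hdiag, hvec, ← add_assoc LF]
    rw [hform, hρeq (c P) (hcnn P) i2]
  have hmono_step : ∀ P, P ⊆ Q → ∀ e ∈ Q, e ∉ P → H P ≤ H (insert e P) := by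
    intro P hPQ e heQ heP
    have hi2 : e.2 ∈ F := (hQ e heQ).2.1
    have h := hgainformula P hPQ e heQ heP ⟨e.2, hi2⟩ rfl
    have hMP := hMpos (c P) (hcnn P)
    have hMoffP := hMoff (c P)
    have h1 := stiel_mulVec_nonneg hMP hMoffP (g := (1 : F → ℝ)) (fun kk => by simp) ⟨e.2, hi2⟩
    have h2 := stiel_mulVec_nonneg hMP hMoffP hrnn ⟨e.2, hi2⟩
    have h3 := stiel_inv_entry_nonneg hMP hMoffP ⟨e.2, hi2⟩ ⟨e.2, hi2⟩
    have h4 : 0 ≤ H (insert e P) - H P := by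
      rw [h]
      apply div_nonneg (mul_nonneg h1 h2)
      linarith
    linarith
  have hsub_step : ∀ P, P ⊆ Q → ∀ a ∈ Q, a ∉ P → ∀ e ∈ Q, e ∉ insert a P →
      H (insert e (insert a P)) - H (insert a P) ≤ H (insert e P) - H P := by
    intro P hPQ a haQ haP e heQ heP'
    have heP : e ∉ P := fun h => heP' (Finset.mem_insert_of_mem h)
    have hi2 : e.2 ∈ F := (hQ e heQ).2.1
    have hj2 : a.2 ∈ F := (hQ a haQ).2.1
    have hfe1 := hgainformula P hPQ e heQ heP ⟨e.2, hi2⟩ rfl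
    have haPQ : insert a P ⊆ Q := Finset.insert_subset haQ hPQ
    have hfe2 := hgainformula (insert a P) haPQ e heQ heP' ⟨e.2, hi2⟩ rfl
    rw [hfe1, hfe2, hcins P a haP ⟨a.2, hj2⟩ rfl]
    have hMP := hMpos (c P) (hcnn P)
    have hNposdef : ((LF + diagonal (c P))
        + diagonal (Pi.single (⟨a.2, hj2⟩ : {x // x ∈ F}) 1)).PosDef := by
      rw [add_assoc, Matrix.diagonal_add]
      exact hMpos _ (fun i => add_nonneg (hcnn P i) (hsing _ i))
    have hkey := stiel_gain_mono hMP (hMoff (c P)) (hMsymm (c P)) ⟨e.2, hi2⟩ ⟨a.2, hj2⟩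
      hNposdef hrnn
    have hmm : LF + Matrix.diagonal (c P + Pi.single (⟨a.2, hj2⟩ : {x // x ∈ F}) 1)
        = (LF + diagonal (c P)) + diagonal (Pi.single (⟨a.2, hj2⟩ : {x // x ∈ F}) 1) := by
      rw [add_assoc, Matrix.diagonal_add]
      rfl
    rw [hmm]
    exact hkey
  -- ## general monotonicity
  have hmonoN : ∀ (n : ℕ) (P P' : Finset (V × V)), P ⊆ P' → P' ⊆ Q → (P' \ P).card = n →
      H P ≤ H P' := by
    intro n
    induction n with
    | zero =>
      intro P P' hPP' hP'Q hcard
      have h1 : P' \ P = ∅ := Finset.card_eq_zero.mp hcard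
      have h2 : P' ⊆ P := Finset.sdiff_eq_empty_iff_subset.mp h1
      rw [Finset.Subset.antisymm h2 hPP']
    | succ n ih =>
      intro P P' hPP' hP'Q hcard
      have hne : (P' \ P).Nonempty := Finset.card_pos.mp (by omega)
      obtain ⟨a, ha⟩ := hne
      have haP' : a ∈ P' := (Finset.mem_sdiff.mp ha).1
      have haP : a ∉ P := (Finset.mem_sdiff.mp ha).2
      have hPsub : P ⊆ P'.erase a := Finset.subset_erase.mpr ⟨hPP', haP⟩
      have herQ : P'.erase a ⊆ Q := (Finset.erase_subset a P').trans hP'Q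
      have hcard' : (P'.erase a \ P).card = n := by
        rw [Finset.erase_sdiff_comm, Finset.card_erase_of_mem ha, hcard]
        omega
      have h1 := ih P (P'.erase a) hPsub herQ hcard'
      have h2 := hmono_step (P'.erase a) herQ a (hP'Q haP') (Finset.notMem_erase a P')
      rw [Finset.insert_erase haP'] at h2
      linarith
  have hmono : ∀ (P P' : Finset (V × V)), P ⊆ P' → P' ⊆ Q → H P ≤ H P' :=
    fun P P' h1 h2 => hmonoN _ P P' h1 h2 rfl
  -- ## general submodularity
  have hsubN : ∀ (n : ℕ) (P P' : Finset (V × V)), P ⊆ P' → P' ⊆ Q → (P' \ P).card = n →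
      ∀ e ∈ Q, e ∉ P' → H (insert e P') - H P' ≤ H (insert e P) - H P := by
    intro n
    induction n with
    | zero =>
      intro P P' hPP' hP'Q hcard e heQ heP'
      have h1 : P' \ P = ∅ := Finset.card_eq_zero.mp hcard
      have h2 : P' ⊆ P := Finset.sdiff_eq_empty_iff_subset.mp h1
      rw [Finset.Subset.antisymm h2 hPP']
    | succ n ih =>
      intro P P' hPP' hP'Q hcard e heQ heP'
      have hne : (P' \ P).Nonempty := Finset.card_pos.mp (by omega)
      obtain ⟨a, ha⟩ := hne
      have haP' : a ∈ P' := (Finset.mem_sdiff.mp ha).1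
      have haP : a ∉ P := (Finset.mem_sdiff.mp ha).2
      have hPsub : P ⊆ P'.erase a := Finset.subset_erase.mpr ⟨hPP', haP⟩
      have herQ : P'.erase a ⊆ Q := (Finset.erase_subset a P').trans hP'Q
      have hcard' : (P'.erase a \ P).card = n := by
        rw [Finset.erase_sdiff_comm, Finset.card_erase_of_mem ha, hcard]
        omega
      have heE : e ∉ P'.erase a := fun h => heP' (Finset.mem_of_mem_erase h)
      have h1 := ih P (P'.erase a) hPsub herQ hcard' e heQ heE
      have heI : e ∉ insert a (P'.erase a) := by
        rw [Finset.insert_erase haP']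
        exact heP'
      have h2 := hsub_step (P'.erase a) herQ a (hP'Q haP') (Finset.notMem_erase a P') e heQ heI
      rw [Finset.insert_erase haP'] at h2
      linarith
  have hsubmod : ∀ (P P' : Finset (V × V)), P ⊆ P' → P' ⊆ Q → ∀ e ∈ Q, e ∉ P' →
      H (insert e P') - H P' ≤ H (insert e P) - H P :=
    fun P P' h1 h2 => hsubN _ P P' h1 h2 rfl
  -- ## telescoping
  have htel : ∀ (R' : Finset (V × V)), R' ⊆ Q → ∀ P, P ⊆ Q →
      H (P ∪ R') - H P ≤ ∑ e ∈ R' \ P, (H (insert e P) - H P) := by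
    intro R'
    induction R' using Finset.induction_on with
    | empty =>
      intro _ P hPQ
      simp
    | @insert a R'' haR'' ih =>
      intro hRQ P hPQ
      have hR''Q : R'' ⊆ Q := (Finset.subset_insert a R'').trans hRQ
      have haQ : a ∈ Q := hRQ (Finset.mem_insert_self a R'')
      by_cases haP : a ∈ P
      · have h1 : P ∪ insert a R'' = P ∪ R'' := by
          rw [Finset.union_insert, Finset.insert_eq_self.mpr (Finset.mem_union_left _ haP)]
        have h2 : insert a R'' \ P = R'' \ P := Finset.insert_sdiff_of_mem _ haP
        rw [h1, h2]
        exact ih hR''Q P hPQ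
      · have haPR : a ∉ P ∪ R'' := by
          rw [Finset.mem_union]
          push_neg
          exact ⟨haP, haR''⟩
        have h1 : H (P ∪ insert a R'') - H (P ∪ R'') ≤ H (insert a P) - H P := by
          rw [Finset.union_insert]
          exact hsubmod P (P ∪ R'') Finset.subset_union_left
            (Finset.union_subset hPQ hR''Q) a haQ haPR
        have h2 := ih hR''Q P hPQ
        have h3 : insert a R'' \ P = insert a (R'' \ P) := Finset.insert_sdiff_of_notMem _ haP
        have h4 : a ∉ R'' \ P := fun h => haR'' (Finset.mem_sdiff.mp h).1
        rw [h3, Finset.sum_insert h4]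
        linarith
  -- ## greedy iterations stay inside Q
  have hTQ : ∀ j, j ≤ k → T j ⊆ Q := by
    intro j
    induction j with
    | zero => intro _; rw [hT0]; exact Finset.empty_subset Q
    | succ n ih =>
      intro hnk
      obtain ⟨e, he, hTn1, _⟩ := hgreedy n (Nat.lt_of_succ_le hnk)
      rw [hTn1]
      exact Finset.insert_subset ((Finset.mem_sdiff.mp he).1)
        (ih (le_of_lt (Nat.lt_of_succ_le hnk)))
  -- ## the recursion
  set cst : ℝ := (1 - ε) / k with hcst
  have hkpos : (0:ℝ) < k := Nat.cast_pos.mpr hk0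
  have hkR : (1:ℝ) ≤ (k:ℝ) := Nat.one_le_cast.mpr hk0
  have hcst0 : 0 < cst := div_pos (by linarith) hkpos
  have hcst1 : cst ≤ 1 := by
    rw [hcst, div_le_one hkpos]
    linarith
  have hrec : ∀ j, j < k → H Tstar - H (T (j+1)) ≤ (1 - cst) * (H Tstar - H (T j)) := by
    intro j hjk
    obtain ⟨e, he, hTj1, hge⟩ := hgreedy j hjk
    have heQ := (Finset.mem_sdiff.mp he).1
    have heT := (Finset.mem_sdiff.mp he).2
    have hTjQ := hTQ j (le_of_lt hjk)
    have hgain0 : 0 ≤ H (insert e (T j)) - H (T j) := by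
      have := hmono_step (T j) hTjQ e heQ heT
      linarith
    by_cases hca : H Tstar ≤ H (T j)
    · rw [hTj1]
      have hcd : 0 ≤ cst * (H (T j) - H Tstar) := mul_nonneg hcst0.le (by linarith)
      nlinarith [hgain0]
    · push_neg at hca
      have h1 : H Tstar ≤ H (T j ∪ Tstar) :=
        hmono Tstar (T j ∪ Tstar) Finset.subset_union_right
          (Finset.union_subset hTjQ hTstarQ)
      have h2 := htel Tstar hTstarQ (T j) hTjQ
      have h3 : ∀ e' ∈ Tstar \ T j,
          (1 - ε) * (H (insert e' (T j)) - H (T j)) ≤ H (insert e (T j)) - H (T j) := by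
        intro e' he'
        apply hge
        have hm := Finset.mem_sdiff.mp he'
        exact Finset.mem_sdiff.mpr ⟨hTstarQ hm.1, hm.2⟩
      have h4 : (1 - ε) * (H (T j ∪ Tstar) - H (T j))
          ≤ ((Tstar \ T j).card : ℝ) * (H (insert e (T j)) - H (T j)) := by
        calc (1 - ε) * (H (T j ∪ Tstar) - H (T j))
            ≤ (1 - ε) * ∑ e' ∈ Tstar \ T j, (H (insert e' (T j)) - H (T j)) :=
              mul_le_mul_of_nonneg_left h2 (by linarith)
        _ = ∑ e' ∈ Tstar \ T j, (1 - ε) * (H (insert e' (T j)) - H (T j)) := Finset.mul_sum _ _ _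
        _ ≤ ∑ _e' ∈ Tstar \ T j, (H (insert e (T j)) - H (T j)) := Finset.sum_le_sum h3
        _ = ((Tstar \ T j).card : ℝ) * (H (insert e (T j)) - H (T j)) := by
          rw [Finset.sum_const, nsmul_eq_mul]
      have hcard : ((Tstar \ T j).card : ℝ) ≤ (k:ℝ) := by
        have h5 := Finset.card_le_card (Finset.sdiff_subset (s := Tstar) (t := T j))
        rw [hTstarcard] at h5
        exact_mod_cast h5
      have h6 : ((Tstar \ T j).card : ℝ) * (H (insert e (T j)) - H (T j))
          ≤ (k : ℝ) * (H (insert e (T j)) - H (T j)) :=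
        mul_le_mul_of_nonneg_right hcard hgain0
      have h7 : (1 - ε) * (H Tstar - H (T j)) ≤ (k : ℝ) * (H (insert e (T j)) - H (T j)) := by
        have h8 : (1 - ε) * (H Tstar - H (T j)) ≤ (1 - ε) * (H (T j ∪ Tstar) - H (T j)) :=
          mul_le_mul_of_nonneg_left (by linarith) (by linarith)
        linarith
      have h9 : cst * (H Tstar - H (T j)) ≤ H (insert e (T j)) - H (T j) := by
        rw [hcst, div_mul_eq_mul_div, div_le_iff₀ hkpos]
        linarith
      rw [hTj1]
      linarith
  -- ## iterate the recursion
  have hiter : ∀ j, j ≤ k → H Tstar - H (T j) ≤ (1 - cst) ^ j * (H Tstar - H (T 0)) := by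
    intro j
    induction j with
    | zero => intro _; simp
    | succ n ih =>
      intro hnk
      have h1 := hrec n (Nat.lt_of_succ_le hnk)
      have h2 := ih (le_of_lt (Nat.lt_of_succ_le hnk))
      have h1c : 0 ≤ 1 - cst := by linarith
      calc H Tstar - H (T (n+1)) ≤ (1 - cst) * (H Tstar - H (T n)) := h1
      _ ≤ (1 - cst) * ((1 - cst) ^ n * (H Tstar - H (T 0))) :=
        mul_le_mul_of_nonneg_left h2 h1c
      _ = (1 - cst) ^ (n+1) * (H Tstar - H (T 0)) := by ring
  have hδ0 : 0 ≤ H Tstar - H (T 0) := by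
    rw [hT0]
    have := hmono ∅ Tstar (Finset.empty_subset _) hTstarQ
    linarith
  -- ## numeric estimates
  have hpow : (1 - cst) ^ k ≤ Real.exp (ε - 1) := by
    have h1 : 1 - cst ≤ Real.exp (-cst) := by linarith [Real.add_one_le_exp (-cst)]
    have h2 : (1 - cst) ^ k ≤ (Real.exp (-cst)) ^ k := pow_le_pow_left₀ (by linarith) h1 k
    rw [← Real.exp_nat_mul] at h2
    have h3 : (k:ℝ) * (-cst) = ε - 1 := by
      rw [hcst]
      field_simp
      ring
    rwa [h3] at h2
  have h2e : (2:ℝ) < Real.exp 1 := by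
    have h := Real.exp_one_gt_d9
    norm_num at h ⊢
    linarith
  have hexpbound : Real.exp (ε - 1) ≤ 1 / Real.exp 1 + ε := by
    have hepos : (0:ℝ) < Real.exp 1 := Real.exp_pos 1
    have h5 : (0:ℝ) < 1 - ε := by linarith
    have hle : Real.exp ε ≤ 1 / (1 - ε) := by
      have h4 := Real.add_one_le_exp (-ε)
      have h6 : Real.exp (-ε) = 1 / Real.exp ε := by
        rw [Real.exp_neg]
        ring
      rw [h6] at h4
      have h7 : 0 < Real.exp ε := Real.exp_pos ε
      have h8 : (1 - ε) * Real.exp ε ≤ 1 := by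
        calc (1 - ε) * Real.exp ε ≤ (1 / Real.exp ε) * Real.exp ε :=
          mul_le_mul_of_nonneg_right (by linarith) h7.le
        _ = 1 := by field_simp
      rw [le_div_iff₀ h5]
      linarith
    have he1 : Real.exp (ε - 1) = Real.exp ε / Real.exp 1 := by
      rw [← Real.exp_sub]
    have h9 : Real.exp ε / Real.exp 1 ≤ (1 / (1 - ε)) / Real.exp 1 := by
      gcongr
    have h10 : (1 / (1 - ε)) / Real.exp 1 ≤ 1 / Real.exp 1 + ε := by
      rw [div_le_iff₀ hepos, add_mul]
      have hee : 1 / Real.exp 1 * Real.exp 1 = 1 := by field_simp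
      rw [hee, div_le_iff₀ h5]
      have h11 : (1:ℝ) ≤ Real.exp 1 * (1 - ε) := by
        nlinarith [mul_le_mul_of_nonneg_right h2e.le (by linarith : (0:ℝ) ≤ 1 - ε)]
      nlinarith [mul_le_mul_of_nonneg_left h11 hε0.le]
    rw [he1]
    linarith [h9, h10]
  -- ## final assembly
  have hfin : H Tstar - H (T k) ≤ (1 / Real.exp 1 + ε) * (H Tstar - H (T 0)) := by
    calc H Tstar - H (T k) ≤ (1 - cst) ^ k * (H Tstar - H (T 0)) := hiter k le_rfl
    _ ≤ (1 / Real.exp 1 + ε) * (H Tstar - H (T 0)) :=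
      mul_le_mul_of_nonneg_right (le_trans hpow hexpbound) hδ0
  have hHempty : H ∅ = H (T 0) := by rw [hT0]
  rw [hHempty]
  have hexpand : (1 - 1 / Real.exp 1 - ε) * (H Tstar - H (T 0))
      = (H Tstar - H (T 0)) - (1 / Real.exp 1 + ε) * (H Tstar - H (T 0)) := by ring
  linarith [hfin]
end
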